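/- arXiv:1602.03124 — 9 statements merged into one kernel-verified Lean document; each statement's English description precedes it below -/
import Mathlib

section
/- Let I be a Boolean edge CSP instance all of whose constraint relations are even Δ-matroids. If f and g are two valid edge labelings of I, then the number of variables that are inconsistent in f is congruent modulo 2 to the number of variables that are inconsistent in g. -/
/-- Flip the values of a Boolean tuple on a finite set of coordinates. -/
def flipS {V : Type*} [DecidableEq V] (α : V → Bool) (S : Finset V) : V → Bool :=
  fun v => if v ∈ S then !(α v) else α v

/-- `M` is a Δ-matroid. -/
def IsDeltaMatroid {V : Type*} [DecidableEq V] (M : Set (V → Bool)) : Prop :=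
  M.Nonempty ∧ ∀ α ∈ M, ∀ β ∈ M, ∀ v, α v ≠ β v →
    ∃ u, α u ≠ β u ∧ flipS α {u, v} ∈ M

/-- Number of ones in a Boolean tuple. -/
def numOnes {V : Type*} [Fintype V] (α : V → Bool) : ℕ :=
  (Finset.univ.filter fun v => α v = true).card

/-- `M` is an even Δ-matroid. -/
def IsEvenDeltaMatroid {V : Type*} [Fintype V] [DecidableEq V] (M : Set (V → Bool)) : Prop :=
  IsDeltaMatroid M ∧ ∀ α ∈ M, ∀ β ∈ M, numOnes α % 2 = numOnes β % 2

/-- A Boolean edge CSP instance: variables `V`, constraints `C`, each constraint has a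
scope and a constraint relation on its scope, and every variable lies in the scope of
exactly two constraints. -/
structure EdgeCSP (V C : Type) [Fintype V] [DecidableEq V] [Fintype C] where
  scope : C → Finset V
  rel : ∀ c : C, Set ({v : V // v ∈ scope c} → Bool)
  twoOcc : ∀ v : V, (Finset.univ.filter fun c => v ∈ scope c).card = 2

/-- An edge labeling of an edge CSP instance: a Boolean value for each incidence pair. -/
def EdgeCSP.Labeling {V C : Type} [Fintype V] [DecidableEq V] [Fintype C]
    (I : EdgeCSP V C) : Type :=
  ∀ c : C, {v : V // v ∈ I.scope c} → Bool

/-- A labeling is valid if each constraint is satisfied. -/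
def EdgeCSP.Valid {V C : Type} [Fintype V] [DecidableEq V] [Fintype C]
    (I : EdgeCSP V C) (f : I.Labeling) : Prop :=
  ∀ c : C, f c ∈ I.rel c

/-- A variable is inconsistent in `f` if its two labels disagree. -/
def EdgeCSP.Inconsistent {V C : Type} [Fintype V] [DecidableEq V] [Fintype C]
    (I : EdgeCSP V C) (f : I.Labeling) (v : V) : Prop :=
  ∃ (c₁ c₂ : C) (h₁ : v ∈ I.scope c₁) (h₂ : v ∈ I.scope c₂),
    c₁ ≠ c₂ ∧ f c₁ ⟨v, h₁⟩ ≠ f c₂ ⟨v, h₂⟩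


section AuxEdgeCSP
variable {V C : Type} [Fintype V] [DecidableEq V] [Fintype C]

/-- The value of an incidence pair, as an element of `ZMod 2` (zero off-scope). -/
noncomputable def lab2 (I : EdgeCSP V C) (f : I.Labeling) (c : C) (v : V) : ZMod 2 :=
  if h : v ∈ I.scope c then (if f c ⟨v, h⟩ then 1 else 0) else 0

lemma sum_lab2_col (I : EdgeCSP V C) (f : I.Labeling) (c : C) :
    ∑ v, lab2 I f c v = (numOnes (f c) : ZMod 2) := by
  have h1 : ∑ v, lab2 I f c v = ∑ v ∈ I.scope c, lab2 I f c v := by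
    rw [eq_comm]
    apply Finset.sum_subset (Finset.subset_univ _)
    intro v _ hv
    simp [lab2, hv]
  rw [h1, numOnes, Finset.card_filter, Nat.cast_sum, Finset.univ_eq_attach,
    ← Finset.sum_attach (I.scope c) (lab2 I f c)]
  apply Finset.sum_congr rfl
  intro x _
  simp [lab2, x.2]

open scoped Classical in
lemma sum_lab2_row (I : EdgeCSP V C) (f : I.Labeling) (v : V) :
    ∑ c, lab2 I f c v = if I.Inconsistent f v then 1 else 0 := by
  obtain ⟨a, b, hab, hset⟩ := Finset.card_eq_two.mp (I.twoOcc v)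
  have ha : v ∈ I.scope a := by
    have : a ∈ Finset.univ.filter fun c => v ∈ I.scope c := by
      rw [hset]; simp
    simpa using this
  have hb : v ∈ I.scope b := by
    have : b ∈ Finset.univ.filter fun c => v ∈ I.scope c := by
      rw [hset]; simp
    simpa using this
  have h1 : ∑ c, lab2 I f c v = ∑ c ∈ ({a, b} : Finset C), lab2 I f c v := by
    rw [eq_comm, ← hset]
    apply Finset.sum_subset (Finset.subset_univ _)
    intro c _ hc
    simp only [Finset.mem_filter, Finset.mem_univ, true_and] at hc
    simp [lab2, hc]
  rw [h1, Finset.sum_pair hab]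
  have hla : lab2 I f a v = if f a ⟨v, ha⟩ then 1 else 0 := by simp [lab2, ha]
  have hlb : lab2 I f b v = if f b ⟨v, hb⟩ then 1 else 0 := by simp [lab2, hb]
  have hiff : I.Inconsistent f v ↔ f a ⟨v, ha⟩ ≠ f b ⟨v, hb⟩ := by
    constructor
    · rintro ⟨c₁, c₂, h₁, h₂, hne, hd⟩
      have hc₁ : c₁ = a ∨ c₁ = b := by
        have : c₁ ∈ Finset.univ.filter fun c => v ∈ I.scope c := by simp [h₁]
        rw [hset] at this; simpa using this
      have hc₂ : c₂ = a ∨ c₂ = b := by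
        have : c₂ ∈ Finset.univ.filter fun c => v ∈ I.scope c := by simp [h₂]
        rw [hset] at this; simpa using this
      rcases hc₁ with rfl | rfl <;> rcases hc₂ with rfl | rfl <;>
        first
        | exact absurd rfl hne
        | exact hd
        | exact hd.symm
    · intro h
      exact ⟨a, b, ha, hb, hab, h⟩
  rw [hla, hlb]
  by_cases hI : I.Inconsistent f v
  · rw [if_pos hI]
    have hd := hiff.mp hI
    cases hfa : f a ⟨v, ha⟩ <;> cases hfb : f b ⟨v, hb⟩ <;> simp_all
  · rw [if_neg hI]
    have heq : f a ⟨v, ha⟩ = f b ⟨v, hb⟩ := by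
      by_contra h; exact hI (hiff.mpr h)
    rw [heq]
    cases f b ⟨v, hb⟩ <;> decide

end AuxEdgeCSP

/-- If all constraint relations of a Boolean edge CSP instance are even Δ-matroids, then
any two valid edge labelings have the same number of inconsistent variables modulo 2. -/
theorem edgeCSP_valid_labelings_inconsistencies_mod_two
    {V C : Type} [Fintype V] [DecidableEq V] [Fintype C]
    (I : EdgeCSP V C) (hrel : ∀ c : C, IsEvenDeltaMatroid (I.rel c))
    (f g : I.Labeling) (hf : I.Valid f) (hg : I.Valid g) :
    {v : V | I.Inconsistent f v}.ncard % 2 = {v : V | I.Inconsistent g v}.ncard % 2 := by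
  classical
  rw [← ZMod.natCast_eq_natCast_iff']
  have key : ∀ (h : I.Labeling), I.Valid h →
      (({v : V | I.Inconsistent h v}.ncard : ℕ) : ZMod 2) = ∑ c, (numOnes (h c) : ZMod 2) := by
    intro h _
    have h1 : {v : V | I.Inconsistent h v}.ncard
        = (Finset.univ.filter fun v => I.Inconsistent h v).card := by
      rw [Set.ncard_eq_toFinset_card']
      congr 1
      ext v
      simp [Set.mem_toFinset]
    rw [h1, Finset.card_filter, Nat.cast_sum]
    have h2 : ∀ v : V, (((if I.Inconsistent h v then 1 else 0 : ℕ)) : ZMod 2)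
        = ∑ c, lab2 I h c v := by
      intro v
      rw [sum_lab2_row]
      split <;> simp
    rw [Finset.sum_congr rfl fun v _ => h2 v, Finset.sum_comm]
    exact Finset.sum_congr rfl fun c _ => sum_lab2_col I h c
  rw [key f hf, key g hg]
  apply Finset.sum_congr rfl
  intro c _
  rw [ZMod.natCast_eq_natCast_iff']
  exact (hrel c).2 _ (hf c) _ (hg c)
end

section
/- Let σ be a finite set, let D ⊆ {0,1}^σ be an even Δ-matroid, let B ⊆ σ, let λ ∈ D, and let v̂ be a new element not in σ. Define D^b ⊆ {0,1}^{(σ∖B) ∪ {v̂}} as the set of all tuples β for which there exists α ∈ D agreeing with β on σ∖B such that either (i) β(v̂) = 0 and α agrees with λ on B, or (ii) β(v̂) = 1 and α differs from λ on exactly one element of B. Then D^b is an even Δ-matroid. -/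
/-- The blossom-contraction of a constraint `D` over ground set `σ`, with respect to the
set `B ⊆ σ` of blossom variables and the base tuple `lam ∈ D`.  The new ground set is
`(σ ∖ B) ∪ {v̂}`, modeled as `Option {x : σ // x ∉ B}` where `none` plays the role of
the new variable `v̂`.  A tuple `β` belongs to the contraction iff there is `α ∈ D`
agreeing with `β` on `σ ∖ B` such that either `β(v̂) = 0` and `α` agrees with `lam` on
`B`, or `β(v̂) = 1` and `α` differs from `lam` on exactly one element of `B`. -/
def contractD {σ : Type*} [DecidableEq σ] (D : Set (σ → Bool)) (B : Finset σ)
    (lam : σ → Bool) : Set (Option {x : σ // x ∉ B} → Bool) :=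
  {β | ∃ α ∈ D, (∀ x : {x : σ // x ∉ B}, α x.val = β (some x)) ∧
    ((β none = false ∧ ∀ x ∈ B, α x = lam x) ∨
     (β none = true ∧ ∃ z ∈ B, α z ≠ lam z ∧ ∀ w ∈ B, α w ≠ lam w → w = z))}

lemma bnot_eq_of_ne {a b : Bool} (h : a ≠ b) : (!a) = b := by
  cases a <;> cases b <;> simp_all

lemma eq_bnot_of_ne {a b : Bool} (h : a ≠ b) : a = (!b) := by
  cases a <;> cases b <;> simp_all

lemma eq_of_not_ne {a b : Bool} (h : ¬ a ≠ b) : a = b := not_not.mp h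

lemma flipS_pair_other {V : Type*} [DecidableEq V] (α : V → Bool) {u w t : V}
    (h1 : t ≠ u) (h2 : t ≠ w) : flipS α {u, w} t = α t := by
  simp [flipS, h1, h2]

lemma flipS_pair_fst {V : Type*} [DecidableEq V] (α : V → Bool) (u w : V) :
    flipS α {u, w} u = !α u := by simp [flipS]

lemma flipS_pair_snd {V : Type*} [DecidableEq V] (α : V → Bool) (u w : V) :
    flipS α {u, w} w = !α w := by simp [flipS]

/-- Flipping a single coordinate changes the parity of the number of ones. -/
lemma numOnes_flip_single {V : Type*} [Fintype V] [DecidableEq V] (α : V → Bool) (v : V) :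
    numOnes (flipS α {v}) % 2 ≠ numOnes α % 2 := by
  classical
  by_cases h : α v = true
  · have hset : (Finset.univ.filter fun w => flipS α {v} w = true)
        = (Finset.univ.filter fun w => α w = true).erase v := by
      ext w
      by_cases hw : w = v
      · subst hw; simp [flipS, h]
      · simp [flipS, hw]
    have hv : v ∈ Finset.univ.filter fun w => α w = true := by simp [h]
    have hcard : numOnes (flipS α {v}) = numOnes α - 1 := by
      unfold numOnes; rw [hset, Finset.card_erase_of_mem hv]
    have hpos : 0 < numOnes α := Finset.card_pos.mpr ⟨v, hv⟩
    omega
  · have hset : (Finset.univ.filter fun w => flipS α {v} w = true)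
        = insert v (Finset.univ.filter fun w => α w = true) := by
      ext w
      by_cases hw : w = v
      · subst hw; simp [flipS, h]
      · simp [flipS, hw]
    have hv : v ∉ Finset.univ.filter fun w => α w = true := by simp [h]
    have hcard : numOnes (flipS α {v}) = numOnes α + 1 := by
      unfold numOnes; rw [hset, Finset.card_insert_of_notMem hv]
    omega

/-- In an even Δ-matroid the exchange element can be chosen distinct from `v`. -/
lemma even_exchange {V : Type*} [Fintype V] [DecidableEq V] {M : Set (V → Bool)}
    (h : IsEvenDeltaMatroid M) {α β : V → Bool} (hα : α ∈ M) (hβ : β ∈ M)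
    {v : V} (hv : α v ≠ β v) :
    ∃ u, α u ≠ β u ∧ u ≠ v ∧ flipS α {u, v} ∈ M := by
  obtain ⟨u, hu, hmem⟩ := h.1.2 α hα β hβ v hv
  refine ⟨u, hu, ?_, hmem⟩
  intro heq
  rw [heq] at hmem
  have hvv : ({v, v} : Finset V) = ({v} : Finset V) := by
    rw [Finset.insert_eq_self]; exact Finset.mem_singleton_self v
  rw [hvv] at hmem
  have hpar := h.2 _ hα _ hmem
  exact numOnes_flip_single α v (by omega)

/-- Parity of a member of the contraction in terms of its witness. -/
lemma parity_wit {σ : Type} [Fintype σ] [DecidableEq σ] (B : Finset σ) (lam : σ → Bool)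
    (α : σ → Bool) (β : Option {x : σ // x ∉ B} → Bool)
    (agr : ∀ x : {x : σ // x ∉ B}, α x.val = β (some x))
    (hd : (β none = false ∧ ∀ x ∈ B, α x = lam x) ∨
      (β none = true ∧ ∃ z ∈ B, α z ≠ lam z ∧ ∀ w ∈ B, α w ≠ lam w → w = z)) :
    (numOnes β + (B.filter fun v => lam v = true).card) % 2 = numOnes α % 2 := by
  classical
  have hβsum : numOnes β = (if β none = true then 1 else 0) +
      ∑ v ∈ Bᶜ, (if α v = true then 1 else 0) := by
    unfold numOnes
    rw [Finset.card_filter, Fintype.sum_option]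
    congr 1
    rw [Finset.sum_subtype Bᶜ (fun x => Finset.mem_compl) (fun v => if α v = true then 1 else 0)]
    exact Finset.sum_congr rfl fun x _ => by rw [agr x]
  have hαsum : numOnes α = (∑ v ∈ B, (if α v = true then 1 else 0)) +
      ∑ v ∈ Bᶜ, (if α v = true then 1 else 0) := by
    unfold numOnes
    rw [Finset.card_filter, ← Finset.sum_add_sum_compl B]
  have hLsum : (B.filter fun v => lam v = true).card
      = ∑ v ∈ B, (if lam v = true then 1 else 0) := Finset.card_filter _ _
  rcases hd with ⟨h0, hall⟩ | ⟨h1, z, hzB, hzd, huniq⟩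
  · have hBB : ∑ v ∈ B, (if α v = true then 1 else 0)
        = ∑ v ∈ B, (if lam v = true then 1 else 0) :=
      Finset.sum_congr rfl fun w hw => by rw [hall w hw]
    rw [h0] at hβsum
    simp only [Bool.false_eq_true, if_false, zero_add] at hβsum
    rw [hBB] at hαsum
    omega
  · have hA : ∑ v ∈ B, (if α v = true then 1 else 0)
        = (if α z = true then 1 else 0) + ∑ v ∈ B.erase z, (if α v = true then 1 else 0) :=
      (Finset.add_sum_erase B _ hzB).symm
    have hL : ∑ v ∈ B, (if lam v = true then 1 else 0)
        = (if lam z = true then 1 else 0) + ∑ v ∈ B.erase z, (if lam v = true then 1 else 0) :=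
      (Finset.add_sum_erase B _ hzB).symm
    have hE : ∑ v ∈ B.erase z, (if α v = true then 1 else 0)
        = ∑ v ∈ B.erase z, (if lam v = true then 1 else 0) := by
      refine Finset.sum_congr rfl fun w hw => ?_
      have hwz : w ≠ z := (Finset.mem_erase.mp hw).1
      have hwB : w ∈ B := (Finset.mem_erase.mp hw).2
      by_contra hne
      have : α w = lam w := by
        by_contra hne2
        exact hwz (huniq w hwB hne2)
      rw [this] at hne
      exact hne rfl
    have hz1 : (if α z = true then 1 else 0) + (if lam z = true then 1 else 0) = 1 := by
      cases ha : α z <;> cases hl : lam z <;> simp_all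
    rw [h1] at hβsum
    simp only [if_true] at hβsum
    rw [hA, hE] at hαsum
    rw [hL] at hLsum
    omega

/-- If `D` is an even Δ-matroid over a finite ground set `σ`, `B ⊆ σ`, and `lam ∈ D`,
then the blossom-contraction `D^b` is again an even Δ-matroid. -/
theorem contractD_isEvenDeltaMatroid {σ : Type} [Fintype σ] [DecidableEq σ]
    (D : Set (σ → Bool)) (B : Finset σ) (lam : σ → Bool)
    (hD : IsEvenDeltaMatroid D) (hlam : lam ∈ D) :
    IsEvenDeltaMatroid (contractD D B lam) := by
  classical
  constructor
  · constructor
    · -- nonemptiness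
      refine ⟨fun o => Option.elim o false (fun x => lam x.val), lam, hlam, ?_, ?_⟩
      · intro x; rfl
      · left; exact ⟨rfl, fun x _ => rfl⟩
    · -- exchange property
      rintro β ⟨α, hα, agr, hd⟩ β' ⟨α', hα', agr', hd'⟩ v hv
      cases v with
      | some x =>
        have hax : α x.val ≠ α' x.val := by rw [agr x, agr' x]; exact hv
        obtain ⟨u, hu, hux, hα1⟩ := even_exchange hD hα hα' hax
        by_cases hB : u ∈ B
        · -- the exchange element lands in B
          rcases hd with ⟨hb0, hall⟩ | ⟨hb1, a, haB, had, hauniq⟩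
          · -- β(v̂) = 0, so α = lam on B; after the flip, diff = {u}
            have hb'1 : β' none = true := by
              rcases hd' with ⟨hb'0, hall'⟩ | ⟨hb'1, _⟩
              · exact absurd (by rw [hall u hB, hall' u hB]) hu
              · exact hb'1
            refine ⟨none, by rw [hb0, hb'1]; simp, flipS α {u, x.val}, hα1, ?_,
              Or.inr ⟨?_, u, hB, ?_, ?_⟩⟩
            · intro y
              have hy1 : y.val ≠ u := fun h => y.prop (h ▸ hB)
              by_cases hyx : y = x
              · subst hyx
                rw [flipS_pair_snd, flipS_pair_snd, agr y]
              · have hyx' : y.val ≠ x.val := fun h => hyx (Subtype.ext h)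
                have hyx2 : (some y : Option {x : σ // x ∉ B}) ≠ some x := by
                  simpa using hyx
                rw [flipS_pair_other α hy1 hyx', flipS_pair_other β (by simp) hyx2, agr y]
            · rw [flipS_pair_fst, hb0]; rfl
            · rw [flipS_pair_fst, hall u hB]; simp
            · intro w hw hwd
              by_cases hwu : w = u
              · exact hwu
              · exfalso
                have hwx : w ≠ x.val := fun h => x.prop (h ▸ hw)
                rw [flipS_pair_other α hwu hwx] at hwd
                exact hwd (hall w hw)
          · -- β(v̂) = 1 with unique diff a
            by_cases hua : u = a
            · subst hua
              have h'a : α' u = lam u := by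
                cases h1 : α u <;> cases h2 : α' u <;> cases h3 : lam u <;> simp_all
              rcases hd' with ⟨hb'0, hall'⟩ | ⟨hb'1, a', ha'B, ha'd, ha'uniq⟩
              · -- β'(v̂) = 0 : flip v̂ together with x
                refine ⟨none, by rw [hb1, hb'0]; simp, flipS α {u, x.val}, hα1, ?_,
                  Or.inl ⟨?_, ?_⟩⟩
                · intro y
                  have hy1 : y.val ≠ u := fun h => y.prop (h ▸ hB)
                  by_cases hyx : y = x
                  · subst hyx
                    rw [flipS_pair_snd, flipS_pair_snd, agr y]
                  · have hyx' : y.val ≠ x.val := fun h => hyx (Subtype.ext h)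
                    have hyx2 : (some y : Option {x : σ // x ∉ B}) ≠ some x := by
                      simpa using hyx
                    rw [flipS_pair_other α hy1 hyx', flipS_pair_other β (by simp) hyx2, agr y]
                · rw [flipS_pair_fst, hb1]; rfl
                · intro w hw
                  by_cases hwu : w = u
                  · subst hwu
                    rw [flipS_pair_fst]
                    exact bnot_eq_of_ne had
                  · have hwx : w ≠ x.val := fun h => x.prop (h ▸ hw)
                    rw [flipS_pair_other α hwu hwx]
                    by_contra hne
                    exact hwu (hauniq w hw hne)
              · -- β'(v̂) = 1 with unique diff a' : need a second exchange
                have ha'u : a' ≠ u := fun h => ha'd (h ▸ h'a)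
                have haa' : α a' = lam a' := by
                  by_contra hne; exact ha'u (hauniq a' ha'B hne)
                have hxa' : a' ≠ x.val := fun h => x.prop (h ▸ ha'B)
                have h1a' : flipS α {u, x.val} a' ≠ α' a' := by
                  rw [flipS_pair_other α ha'u hxa', haa']
                  exact fun h => ha'd h.symm
                obtain ⟨u₂, hu₂, hu₂a', hα2⟩ := even_exchange hD hα1 hα' h1a'
                have hu₂x : u₂ ≠ x.val := by
                  intro h; subst h
                  rw [flipS_pair_snd] at hu₂
                  exact hu₂ (bnot_eq_of_ne hax)
                have hu₂B : u₂ ∉ B := by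
                  intro hmem
                  by_cases h : u₂ = u
                  · subst h
                    rw [flipS_pair_fst, bnot_eq_of_ne had, h'a] at hu₂
                    exact hu₂ rfl
                  · rw [flipS_pair_other α h hu₂x] at hu₂
                    have h1 : α u₂ = lam u₂ := by
                      by_contra hne; exact h (hauniq u₂ hmem hne)
                    have h2 : α' u₂ = lam u₂ := by
                      by_contra hne; exact hu₂a' (ha'uniq u₂ hmem hne)
                    rw [h1, h2] at hu₂; exact hu₂ rfl
                have hu₂u : u₂ ≠ u := fun h => hu₂B (h ▸ hB)
                have hαu₂ : α u₂ ≠ α' u₂ := by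
                  rwa [flipS_pair_other α hu₂u hu₂x] at hu₂
                have hβu₂ : β (some ⟨u₂, hu₂B⟩) ≠ β' (some ⟨u₂, hu₂B⟩) := by
                  rw [← agr ⟨u₂, hu₂B⟩, ← agr' ⟨u₂, hu₂B⟩]; exact hαu₂
                refine ⟨some ⟨u₂, hu₂B⟩, hβu₂,
                  flipS (flipS α {u, x.val}) {u₂, a'}, hα2, ?_,
                  Or.inr ⟨?_, a', ha'B, ?_, ?_⟩⟩
                · intro y
                  have hyu : y.val ≠ u := fun h => y.prop (h ▸ hB)
                  have hya' : y.val ≠ a' := fun h => y.prop (h ▸ ha'B)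
                  by_cases hy2 : y.val = u₂
                  · have hyeq : y = ⟨u₂, hu₂B⟩ := Subtype.ext hy2
                    subst hyeq
                    rw [flipS_pair_fst, flipS_pair_other α hu₂u hu₂x,
                      flipS_pair_fst, agr ⟨u₂, hu₂B⟩]
                  · by_cases hyx : y = x
                    · subst hyx
                      have hne : (some y : Option {x : σ // x ∉ B}) ≠ some ⟨u₂, hu₂B⟩ := by
                        simp only [ne_eq, Option.some.injEq]
                        intro h; exact hy2 (congrArg Subtype.val h)
                      rw [flipS_pair_other (flipS α {u, y.val}) hy2 hya',
                        flipS_pair_snd, flipS_pair_snd, agr y]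
                    · have hyx' : y.val ≠ x.val := fun h => hyx (Subtype.ext h)
                      have hne1 : (some y : Option {x : σ // x ∉ B}) ≠ some ⟨u₂, hu₂B⟩ := by
                        simp only [ne_eq, Option.some.injEq]
                        intro h; exact hy2 (congrArg Subtype.val h)
                      have hne2 : (some y : Option {x : σ // x ∉ B}) ≠ some x := by
                        simpa using hyx
                      rw [flipS_pair_other (flipS α {u, x.val}) hy2 hya',
                        flipS_pair_other α hyu hyx', flipS_pair_other β hne1 hne2, agr y]
                · rw [flipS_pair_other β (by simp) (by simp), hb1]
                · rw [flipS_pair_snd, flipS_pair_other α ha'u hxa', haa']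
                  simp
                · intro w hw hwd
                  by_cases hwa' : w = a'
                  · exact hwa'
                  · exfalso
                    have hwx : w ≠ x.val := fun h => x.prop (h ▸ hw)
                    have hwu₂ : w ≠ u₂ := fun h => hu₂B (h ▸ hw)
                    rw [flipS_pair_other (flipS α {u, x.val}) hwu₂ hwa'] at hwd
                    by_cases hwu : w = u
                    · subst hwu
                      rw [flipS_pair_fst] at hwd
                      exact hwd (bnot_eq_of_ne had)
                    · rw [flipS_pair_other α hwu hwx] at hwd
                      have : α w = lam w := by
                        by_contra hne; exact hwu (hauniq w hw hne)
                      exact hwd this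
            · -- u ≠ a, u ∈ B : then α u = lam u, so β' must be in the 1-case with diff {u}
              have hau : α u = lam u := by
                by_contra hne; exact hua (hauniq u hB hne)
              have h'u : α' u ≠ lam u := fun h => hu (hau ▸ h ▸ rfl)
              rcases hd' with ⟨hb'0, hall'⟩ | ⟨hb'1, z', hz'B, hz'd, hz'uniq⟩
              · exact absurd (hall' u hB) h'u
              have huniq' : ∀ w ∈ B, α' w ≠ lam w → w = u := fun w hw hwd =>
                (hz'uniq w hw hwd).trans (hz'uniq u hB h'u).symm
              -- second exchange at a
              have hax' : a ≠ x.val := fun h => x.prop (h ▸ haB)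
              have hau' : a ≠ u := fun h => hua h.symm
              have h'a : α' a = lam a := by
                by_contra hne; exact hau' (huniq' a haB hne)
              have h1a : flipS α {u, x.val} a ≠ α' a := by
                rw [flipS_pair_other α hau' hax', h'a]
                exact had
              obtain ⟨u₂, hu₂, hu₂a, hα2⟩ := even_exchange hD hα1 hα' h1a
              have hu₂x : u₂ ≠ x.val := by
                intro h; subst h
                rw [flipS_pair_snd] at hu₂
                exact hu₂ (bnot_eq_of_ne hax)
              have hu₂B : u₂ ∉ B := by
                intro hmem
                by_cases h : u₂ = u
                · subst h
                  rw [flipS_pair_fst, hau] at hu₂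
                  exact hu₂ (bnot_eq_of_ne fun hh => h'u hh.symm)
                · rw [flipS_pair_other α h hu₂x] at hu₂
                  have h1 : α u₂ = lam u₂ := by
                    by_contra hne; exact hu₂a (hauniq u₂ hmem hne)
                  have h2 : α' u₂ = lam u₂ := by
                    by_contra hne; exact h (huniq' u₂ hmem hne)
                  rw [h1, h2] at hu₂; exact hu₂ rfl
              have hu₂u : u₂ ≠ u := fun h => hu₂B (h ▸ hB)
              have hαu₂ : α u₂ ≠ α' u₂ := by
                rwa [flipS_pair_other α hu₂u hu₂x] at hu₂
              have hβu₂ : β (some ⟨u₂, hu₂B⟩) ≠ β' (some ⟨u₂, hu₂B⟩) := by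
                rw [← agr ⟨u₂, hu₂B⟩, ← agr' ⟨u₂, hu₂B⟩]; exact hαu₂
              refine ⟨some ⟨u₂, hu₂B⟩, hβu₂,
                flipS (flipS α {u, x.val}) {u₂, a}, hα2, ?_,
                Or.inr ⟨?_, u, hB, ?_, ?_⟩⟩
              · intro y
                have hyu : y.val ≠ u := fun h => y.prop (h ▸ hB)
                have hya : y.val ≠ a := fun h => y.prop (h ▸ haB)
                by_cases hy2 : y.val = u₂
                · have hyeq : y = ⟨u₂, hu₂B⟩ := Subtype.ext hy2
                  subst hyeq
                  rw [flipS_pair_fst, flipS_pair_other α hu₂u hu₂x,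
                    flipS_pair_fst, agr ⟨u₂, hu₂B⟩]
                · by_cases hyx : y = x
                  · subst hyx
                    rw [flipS_pair_other (flipS α {u, y.val}) hy2 hya,
                      flipS_pair_snd, flipS_pair_snd, agr y]
                  · have hyx' : y.val ≠ x.val := fun h => hyx (Subtype.ext h)
                    have hne1 : (some y : Option {x : σ // x ∉ B}) ≠ some ⟨u₂, hu₂B⟩ := by
                      simp only [ne_eq, Option.some.injEq]
                      intro h; exact hy2 (congrArg Subtype.val h)
                    have hne2 : (some y : Option {x : σ // x ∉ B}) ≠ some x := by
                      simpa using hyx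
                    rw [flipS_pair_other (flipS α {u, x.val}) hy2 hya,
                      flipS_pair_other α hyu hyx', flipS_pair_other β hne1 hne2, agr y]
              · rw [flipS_pair_other β (by simp) (by simp), hb1]
              · rw [flipS_pair_other (flipS α {u, x.val}) (fun h => hu₂u h.symm)
                  (fun h => hau' h.symm), flipS_pair_fst, hau]
                simp
              · intro w hw hwd
                by_cases hwu : w = u
                · exact hwu
                · exfalso
                  have hwx : w ≠ x.val := fun h => x.prop (h ▸ hw)
                  have hwu₂ : w ≠ u₂ := fun h => hu₂B (h ▸ hw)
                  by_cases hwa : w = a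
                  · subst hwa
                    rw [flipS_pair_snd, flipS_pair_other α hau' hax'] at hwd
                    exact hwd (bnot_eq_of_ne had)
                  · rw [flipS_pair_other (flipS α {u, x.val}) hwu₂ hwa,
                      flipS_pair_other α hwu hwx] at hwd
                    have : α w = lam w := by
                      by_contra hne; exact hwa (hauniq w hw hne)
                    exact hwd this
        · -- u ∉ B : easy case, the diff structure on B is untouched
          have hβu : β (some ⟨u, hB⟩) ≠ β' (some ⟨u, hB⟩) := by
            rw [← agr ⟨u, hB⟩, ← agr' ⟨u, hB⟩]; exact hu
          refine ⟨some ⟨u, hB⟩, hβu, flipS α {u, x.val}, hα1, ?_, ?_⟩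
          · intro y
            by_cases hy2 : y.val = u
            · have hyeq : y = ⟨u, hB⟩ := Subtype.ext hy2
              subst hyeq
              rw [flipS_pair_fst, flipS_pair_fst, agr ⟨u, hB⟩]
            · by_cases hyx : y = x
              · subst hyx
                rw [flipS_pair_snd, flipS_pair_snd, agr y]
              · have hyx' : y.val ≠ x.val := fun h => hyx (Subtype.ext h)
                have hne1 : (some y : Option {x : σ // x ∉ B}) ≠ some ⟨u, hB⟩ := by
                  simp only [ne_eq, Option.some.injEq]
                  intro h; exact hy2 (congrArg Subtype.val h)
                have hne2 : (some y : Option {x : σ // x ∉ B}) ≠ some x := by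
                  simpa using hyx
                rw [flipS_pair_other α hy2 hyx', flipS_pair_other β hne1 hne2, agr y]
          · have hflipB : ∀ w ∈ B, flipS α {u, x.val} w = α w := by
              intro w hw
              have hwu : w ≠ u := fun h => hB (h ▸ hw)
              have hwx : w ≠ x.val := fun h => x.prop (h ▸ hw)
              exact flipS_pair_other α hwu hwx
            have hnone : flipS β {some ⟨u, hB⟩, some x} none = β none :=
              flipS_pair_other β (by simp) (by simp)
            rcases hd with ⟨hb0, hall⟩ | ⟨hb1, a, haB, had, hauniq⟩
            · left
              exact ⟨by rw [hnone, hb0], fun w hw => by rw [hflipB w hw]; exact hall w hw⟩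
            · right
              refine ⟨by rw [hnone, hb1], a, haB, by rw [hflipB a haB]; exact had, ?_⟩
              intro w hw hwd
              rw [hflipB w hw] at hwd
              exact hauniq w hw hwd
      | none =>
        -- flip at v̂
        rcases hd with ⟨hb0, hall⟩ | ⟨hb1, a, haB, had, hauniq⟩
        · -- β(v̂)=0; so β'(v̂)=1 with unique diff a'
          rcases hd' with ⟨hb'0, _⟩ | ⟨hb'1, a', ha'B, ha'd, ha'uniq⟩
          · exact absurd (by rw [hb0, hb'0]) hv
          have haa' : α a' ≠ α' a' := by
            rw [hall a' ha'B]; exact fun h => ha'd h.symm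
          obtain ⟨u, hu, hua', hα1⟩ := even_exchange hD hα hα' haa'
          have huB : u ∉ B := by
            intro hmem
            apply hu
            rw [hall u hmem]
            have : α' u = lam u := by
              by_contra hne; exact hua' (ha'uniq u hmem hne)
            rw [this]
          have hβu : β (some ⟨u, huB⟩) ≠ β' (some ⟨u, huB⟩) := by
            rw [← agr ⟨u, huB⟩, ← agr' ⟨u, huB⟩]; exact hu
          refine ⟨some ⟨u, huB⟩, hβu, flipS α {u, a'}, hα1, ?_,
            Or.inr ⟨?_, a', ha'B, ?_, ?_⟩⟩
          · intro y
            have hya' : y.val ≠ a' := fun h => y.prop (h ▸ ha'B)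
            by_cases hy2 : y.val = u
            · have hyeq : y = ⟨u, huB⟩ := Subtype.ext hy2
              subst hyeq
              rw [flipS_pair_fst, flipS_pair_fst, agr ⟨u, huB⟩]
            · have hne1 : (some y : Option {x : σ // x ∉ B}) ≠ some ⟨u, huB⟩ := by
                simp only [ne_eq, Option.some.injEq]
                intro h; exact hy2 (congrArg Subtype.val h)
              have hne2 : (some y : Option {x : σ // x ∉ B}) ≠ none := by simp
              rw [flipS_pair_other α hy2 hya', flipS_pair_other β hne1 hne2, agr y]
          · rw [flipS_pair_snd, hb0]; rfl
          · rw [flipS_pair_snd, hall a' ha'B]; simp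
          · intro w hw hwd
            by_cases hwa' : w = a'
            · exact hwa'
            · exfalso
              have hwu : w ≠ u := fun h => huB (h ▸ hw)
              rw [flipS_pair_other α hwu hwa'] at hwd
              exact hwd (hall w hw)
        · -- β(v̂)=1 with unique diff a; β'(v̂)=0
          rcases hd' with ⟨hb'0, hall'⟩ | ⟨hb'1, _⟩
          swap
          · exact absurd (by rw [hb1, hb'1]) hv
          have haa : α a ≠ α' a := by rw [hall' a haB]; exact had
          obtain ⟨u, hu, hua, hα1⟩ := even_exchange hD hα hα' haa
          have huB : u ∉ B := by
            intro hmem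
            apply hu
            rw [hall' u hmem]
            by_contra hne
            exact hua (hauniq u hmem hne)
          have hβu : β (some ⟨u, huB⟩) ≠ β' (some ⟨u, huB⟩) := by
            rw [← agr ⟨u, huB⟩, ← agr' ⟨u, huB⟩]; exact hu
          refine ⟨some ⟨u, huB⟩, hβu, flipS α {u, a}, hα1, ?_, Or.inl ⟨?_, ?_⟩⟩
          · intro y
            have hya : y.val ≠ a := fun h => y.prop (h ▸ haB)
            by_cases hy2 : y.val = u
            · have hyeq : y = ⟨u, huB⟩ := Subtype.ext hy2
              subst hyeq
              rw [flipS_pair_fst, flipS_pair_fst, agr ⟨u, huB⟩]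
            · have hne1 : (some y : Option {x : σ // x ∉ B}) ≠ some ⟨u, huB⟩ := by
                simp only [ne_eq, Option.some.injEq]
                intro h; exact hy2 (congrArg Subtype.val h)
              have hne2 : (some y : Option {x : σ // x ∉ B}) ≠ none := by simp
              rw [flipS_pair_other α hy2 hya, flipS_pair_other β hne1 hne2, agr y]
          · rw [flipS_pair_snd, hb1]; rfl
          · intro w hw
            by_cases hwa : w = a
            · subst hwa
              rw [flipS_pair_snd]
              exact bnot_eq_of_ne had
            · have hwu : w ≠ u := fun h => huB (h ▸ hw)
              rw [flipS_pair_other α hwu hwa]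
              by_contra hne
              exact hwa (hauniq w hw hne)
  · -- evenness
    rintro β ⟨α, hα, agr, hd⟩ β' ⟨α', hα', agr', hd'⟩
    have h1 := parity_wit B lam α β agr hd
    have h2 := parity_wit B lam α' β' agr' hd'
    have h3 := hD.2 α hα α' hα'
    omega
end

section
/- If M ⊆ {0,1}^U and N ⊆ {0,1}^V are coverable Δ-matroids on disjoint finite ground sets U and V, then their direct product M × N ⊆ {0,1}^{U ∪ V} is a coverable Δ-matroid. -/
/-- Flip the value of a Boolean tuple at a single coordinate. -/
def flip1 {V : Type*} [DecidableEq V] (α : V → Bool) (u : V) : V → Bool :=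
  flipS α {u}

/-- `α` and `β` are even-neighbors with respect to `M`. -/
def EvenNeighbors {V : Type*} [DecidableEq V] (M : Set (V → Bool)) (α β : V → Bool) : Prop :=
  ∃ u v, u ≠ v ∧ β = flip1 (flip1 α u) v ∧ flip1 α u ∉ M

/-- Reachability via chains of even-neighbors inside `M`. -/
def Reachable {V : Type*} [DecidableEq V] (M : Set (V → Bool)) :
    (V → Bool) → (V → Bool) → Prop :=
  Relation.ReflTransGen (fun x y => x ∈ M ∧ y ∈ M ∧ EvenNeighbors M x y)

/-- `M` is coverable. -/
def Coverable {V : Type*} [Fintype V] [DecidableEq V] (M : Set (V → Bool)) : Prop :=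
  ∀ α ∈ M, ∃ Mα : Set (V → Bool),
    IsEvenDeltaMatroid Mα ∧
    (∀ β ∈ M, Reachable M α β → β ∈ Mα) ∧
    (∀ γ ∈ M, Reachable M α γ → ∀ u v,
      flip1 (flip1 γ u) v ∈ Mα → flip1 (flip1 γ u) v ∉ M →
      flip1 γ u ∈ M ∧ flip1 γ v ∈ M)

/-- Direct product of two sets of tuples on disjoint ground sets. -/
def prodSet {U V : Type*} (M : Set (U → Bool)) (N : Set (V → Bool)) :
    Set (U ⊕ V → Bool) :=
  {h | (fun u => h (Sum.inl u)) ∈ M ∧ (fun v => h (Sum.inr v)) ∈ N}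

/-- `M` is an even-zebra Δ-matroid. -/
def IsEvenZebra {V : Type*} [Fintype V] [DecidableEq V] (M : Set (V → Bool)) : Prop :=
  ∀ α ∈ M, ∃ Mα : Set (V → Bool),
    IsEvenDeltaMatroid Mα ∧
    (∀ β ∈ M, numOnes β % 2 = numOnes α % 2 → β ∈ Mα) ∧
    (∀ β ∈ M, ∀ u v, flip1 (flip1 β u) v ∈ Mα → flip1 (flip1 β u) v ∉ M →
      flip1 β u ∈ M ∧ flip1 β v ∈ M)

/-- Identification of two variables of `M`. -/
def identify {U : Type*} [DecidableEq U] (M : Set (U → Bool)) (w₁ w₂ : U) :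
    Set ({x : U // x ≠ w₁ ∧ x ≠ w₂} → Bool) :=
  {g | ∃ β ∈ M, β w₁ = β w₂ ∧ ∀ x : {x : U // x ≠ w₁ ∧ x ≠ w₂}, g x = β x.val}


section Aux

set_option linter.unusedSectionVars false

variable {U V : Type} [Fintype U] [DecidableEq U] [Fintype V] [DecidableEq V]

/-- Left restriction of a tuple on a disjoint union. -/
def resL (h : U ⊕ V → Bool) : U → Bool := fun u => h (Sum.inl u)

/-- Right restriction of a tuple on a disjoint union. -/
def resR (h : U ⊕ V → Bool) : V → Bool := fun v => h (Sum.inr v)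

lemma mem_prodSet {M : Set (U → Bool)} {N : Set (V → Bool)} {h : U ⊕ V → Bool} :
    h ∈ prodSet M N ↔ resL h ∈ M ∧ resR h ∈ N := Iff.rfl

lemma resL_flip1_inl (h : U ⊕ V → Bool) (a : U) :
    resL (flip1 h (Sum.inl a)) = flip1 (resL h) a := by
  funext x
  simp only [resL, flip1, flipS, Finset.mem_singleton, Sum.inl.injEq]

lemma resR_flip1_inl (h : U ⊕ V → Bool) (a : U) :
    resR (flip1 h (Sum.inl a)) = resR h := by
  funext x
  simp only [resR, flip1, flipS, Finset.mem_singleton, reduceCtorEq, if_false]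

lemma resL_flip1_inr (h : U ⊕ V → Bool) (a : V) :
    resL (flip1 h (Sum.inr a)) = resL h := by
  funext x
  simp only [resL, flip1, flipS, Finset.mem_singleton, reduceCtorEq, if_false]

lemma resR_flip1_inr (h : U ⊕ V → Bool) (a : V) :
    resR (flip1 h (Sum.inr a)) = flip1 (resR h) a := by
  funext x
  simp only [resR, flip1, flipS, Finset.mem_singleton, Sum.inr.injEq]

lemma resL_flipS_pair_inl (h : U ⊕ V → Bool) (u a : U) :
    resL (flipS h {Sum.inl u, Sum.inl a}) = flipS (resL h) {u, a} := by
  funext x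
  simp only [resL, flipS, Finset.mem_insert, Finset.mem_singleton, Sum.inl.injEq]

lemma resR_flipS_pair_inl (h : U ⊕ V → Bool) (u a : U) :
    resR (flipS h {Sum.inl u, Sum.inl a}) = resR h := by
  funext x
  simp only [resR, flipS, Finset.mem_insert, Finset.mem_singleton, reduceCtorEq, or_self,
    if_false]

lemma resL_flipS_pair_inr (h : U ⊕ V → Bool) (u a : V) :
    resL (flipS h {Sum.inr u, Sum.inr a}) = resL h := by
  funext x
  simp only [resL, flipS, Finset.mem_insert, Finset.mem_singleton, reduceCtorEq, or_self,
    if_false]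

lemma resR_flipS_pair_inr (h : U ⊕ V → Bool) (u a : V) :
    resR (flipS h {Sum.inr u, Sum.inr a}) = flipS (resR h) {u, a} := by
  funext x
  simp only [resR, flipS, Finset.mem_insert, Finset.mem_singleton, Sum.inr.injEq]

lemma flip1_flip1_self {W : Type} [DecidableEq W] (h : W → Bool) (u : W) :
    flip1 (flip1 h u) u = h := by
  funext x
  simp only [flip1, flipS, Finset.mem_singleton]
  by_cases hx : x = u <;> simp [hx]

lemma numOnes_split (h : U ⊕ V → Bool) :
    numOnes h = numOnes (resL h) + numOnes (resR h) := by
  simp only [numOnes, Finset.card_filter]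
  rw [Fintype.sum_sum_type]
  rfl

lemma numOnes_flip1_ne {W : Type} [Fintype W] [DecidableEq W] (γ : W → Bool) (a : W) :
    numOnes (flip1 γ a) % 2 ≠ numOnes γ % 2 := by
  have key : ∀ δ : W → Bool,
      numOnes δ = (if δ a = true then 1 else 0)
        + ∑ x ∈ Finset.univ.erase a, (if δ x = true then 1 else 0) := by
    intro δ
    rw [numOnes, Finset.card_filter, ← Finset.add_sum_erase _ _ (Finset.mem_univ a)]
  have hsame : (∑ x ∈ Finset.univ.erase a, (if flip1 γ a x = true then 1 else 0))
      = ∑ x ∈ Finset.univ.erase a, (if γ x = true then 1 else 0) := by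
    refine Finset.sum_congr rfl fun x hx => ?_
    have hxa : x ≠ a := Finset.ne_of_mem_erase hx
    simp [flip1, flipS, hxa]
  have ha : flip1 γ a a = !(γ a) := by simp [flip1, flipS]
  rw [key (flip1 γ a), key γ, hsame, ha]
  cases γ a <;> simp <;> omega

/-- The direct product of Δ-matroids is a Δ-matroid. -/
lemma prodSet_delta {M : Set (U → Bool)} {N : Set (V → Bool)}
    (hM : IsDeltaMatroid M) (hN : IsDeltaMatroid N) : IsDeltaMatroid (prodSet M N) := by
  obtain ⟨⟨m, hm⟩, hMex⟩ := hM
  obtain ⟨⟨n, hn⟩, hNex⟩ := hN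
  constructor
  · exact ⟨Sum.elim m n, hm, hn⟩
  · rintro α ⟨hα1, hα2⟩ β ⟨hβ1, hβ2⟩ v hv
    cases v with
    | inl a =>
      obtain ⟨u, hu, hmem⟩ := hMex _ hα1 _ hβ1 a hv
      refine ⟨Sum.inl u, hu, ?_, ?_⟩
      · rw [show (fun x => flipS α {Sum.inl u, Sum.inl a} (Sum.inl x))
            = resL (flipS α {Sum.inl u, Sum.inl a}) from rfl, resL_flipS_pair_inl]
        exact hmem
      · rw [show (fun x => flipS α {Sum.inl u, Sum.inl a} (Sum.inr x))
            = resR (flipS α {Sum.inl u, Sum.inl a}) from rfl, resR_flipS_pair_inl]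
        exact hα2
    | inr a =>
      obtain ⟨u, hu, hmem⟩ := hNex _ hα2 _ hβ2 a hv
      refine ⟨Sum.inr u, hu, ?_, ?_⟩
      · rw [show (fun x => flipS α {Sum.inr u, Sum.inr a} (Sum.inl x))
            = resL (flipS α {Sum.inr u, Sum.inr a}) from rfl, resL_flipS_pair_inr]
        exact hα1
      · rw [show (fun x => flipS α {Sum.inr u, Sum.inr a} (Sum.inr x))
            = resR (flipS α {Sum.inr u, Sum.inr a}) from rfl, resR_flipS_pair_inr]
        exact hmem

/-- The direct product of even Δ-matroids is an even Δ-matroid. -/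
lemma prodSet_even {M : Set (U → Bool)} {N : Set (V → Bool)}
    (hM : IsEvenDeltaMatroid M) (hN : IsEvenDeltaMatroid N) :
    IsEvenDeltaMatroid (prodSet M N) := by
  refine ⟨prodSet_delta hM.1 hN.1, ?_⟩
  rintro α ⟨hα1, hα2⟩ β ⟨hβ1, hβ2⟩
  rw [numOnes_split α, numOnes_split β, Nat.add_mod, Nat.add_mod (numOnes (resL β)),
    hM.2 (resL α) hα1 (resL β) hβ1, hN.2 (resR α) hα2 (resR β) hβ2]

/-- A step in the product matroid happens entirely on one side. -/
lemma step_decomp {M : Set (U → Bool)} {N : Set (V → Bool)} {x y : U ⊕ V → Bool}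
    (hx : x ∈ prodSet M N) (hy : y ∈ prodSet M N) (hen : EvenNeighbors (prodSet M N) x y) :
    ((resL x ∈ M ∧ resL y ∈ M ∧ EvenNeighbors M (resL x) (resL y)) ∧ resR y = resR x) ∨
    ((resR x ∈ N ∧ resR y ∈ N ∧ EvenNeighbors N (resR x) (resR y)) ∧ resL y = resL x) := by
  obtain ⟨u, v, huv, hyeq, hnot⟩ := hen
  cases u with
  | inl a =>
    cases v with
    | inl b =>
      left
      have hab : a ≠ b := fun h => huv (by rw [h])
      have hL : resL y = flip1 (flip1 (resL x) a) b := by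
        rw [hyeq, resL_flip1_inl, resL_flip1_inl]
      have hR : resR y = resR x := by
        rw [hyeq, resR_flip1_inl, resR_flip1_inl]
      refine ⟨⟨hx.1, ?_, a, b, hab, hL, ?_⟩, hR⟩
      · exact hy.1
      · intro hmem
        exact hnot ⟨by rw [show (fun z => flip1 x (Sum.inl a) (Sum.inl z)) =
            resL (flip1 x (Sum.inl a)) from rfl, resL_flip1_inl]; exact hmem,
          by rw [show (fun z => flip1 x (Sum.inl a) (Sum.inr z)) =
            resR (flip1 x (Sum.inl a)) from rfl, resR_flip1_inl]; exact hx.2⟩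
    | inr b =>
      exfalso
      have h1 : resL y = flip1 (resL x) a := by
        rw [hyeq, resL_flip1_inr, resL_flip1_inl]
      apply hnot
      refine ⟨?_, ?_⟩
      · rw [show (fun z => flip1 x (Sum.inl a) (Sum.inl z)) =
            resL (flip1 x (Sum.inl a)) from rfl, resL_flip1_inl, ← h1]
        exact hy.1
      · rw [show (fun z => flip1 x (Sum.inl a) (Sum.inr z)) =
            resR (flip1 x (Sum.inl a)) from rfl, resR_flip1_inl]
        exact hx.2
  | inr a =>
    cases v with
    | inl b =>
      exfalso
      have h1 : resR y = flip1 (resR x) a := by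
        rw [hyeq, resR_flip1_inl, resR_flip1_inr]
      apply hnot
      refine ⟨?_, ?_⟩
      · rw [show (fun z => flip1 x (Sum.inr a) (Sum.inl z)) =
            resL (flip1 x (Sum.inr a)) from rfl, resL_flip1_inr]
        exact hx.1
      · rw [show (fun z => flip1 x (Sum.inr a) (Sum.inr z)) =
            resR (flip1 x (Sum.inr a)) from rfl, resR_flip1_inr, ← h1]
        exact hy.2
    | inr b =>
      right
      have hab : a ≠ b := fun h => huv (by rw [h])
      have hR : resR y = flip1 (flip1 (resR x) a) b := by
        rw [hyeq, resR_flip1_inr, resR_flip1_inr]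
      have hL : resL y = resL x := by
        rw [hyeq, resL_flip1_inr, resL_flip1_inr]
      refine ⟨⟨hx.2, ?_, a, b, hab, hR, ?_⟩, hL⟩
      · exact hy.2
      · intro hmem
        exact hnot ⟨by rw [show (fun z => flip1 x (Sum.inr a) (Sum.inl z)) =
            resL (flip1 x (Sum.inr a)) from rfl, resL_flip1_inr]; exact hx.1,
          by rw [show (fun z => flip1 x (Sum.inr a) (Sum.inr z)) =
            resR (flip1 x (Sum.inr a)) from rfl, resR_flip1_inr]; exact hmem⟩

/-- Reachability in the product decomposes into componentwise reachability. -/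
lemma reach_decomp {M : Set (U → Bool)} {N : Set (V → Bool)} {α β : U ⊕ V → Bool}
    (h : Reachable (prodSet M N) α β) :
    Reachable M (resL α) (resL β) ∧ Reachable N (resR α) (resR β) := by
  induction h with
  | refl => exact ⟨Relation.ReflTransGen.refl, Relation.ReflTransGen.refl⟩
  | tail hxy hstep ih =>
    obtain ⟨hx, hy, hen⟩ := hstep
    rcases step_decomp hx hy hen with ⟨hstepL, hReq⟩ | ⟨hstepR, hLeq⟩
    · exact ⟨ih.1.tail hstepL, by rw [hReq]; exact ih.2⟩
    · exact ⟨by rw [hLeq]; exact ih.1, ih.2.tail hstepR⟩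

end Aux

/-- The direct product of two coverable Δ-matroids on disjoint ground sets is a
coverable Δ-matroid. -/
theorem prodSet_coverable {U V : Type} [Fintype U] [DecidableEq U] [Fintype V] [DecidableEq V]
    (M : Set (U → Bool)) (N : Set (V → Bool))
    (hM : IsDeltaMatroid M) (hMc : Coverable M)
    (hN : IsDeltaMatroid N) (hNc : Coverable N) :
    IsDeltaMatroid (prodSet M N) ∧ Coverable (prodSet M N) := by
  refine ⟨prodSet_delta hM hN, ?_⟩
  intro α hα
  obtain ⟨M₁, hM₁even, hM₁cov, hM₁cond⟩ := hMc (resL α) hα.1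
  obtain ⟨M₂, hM₂even, hM₂cov, hM₂cond⟩ := hNc (resR α) hα.2
  refine ⟨prodSet M₁ M₂, prodSet_even hM₁even hM₂even, ?_, ?_⟩
  · intro β hβ hreach
    obtain ⟨h1, h2⟩ := reach_decomp hreach
    exact ⟨hM₁cov _ hβ.1 h1, hM₂cov _ hβ.2 h2⟩
  · intro γ hγ hreach u v hmem hnot
    obtain ⟨hr1, hr2⟩ := reach_decomp hreach
    have hγ₁ : resL γ ∈ M₁ := hM₁cov _ hγ.1 hr1
    have hγ₂ : resR γ ∈ M₂ := hM₂cov _ hγ.2 hr2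
    by_cases huv : u = v
    · exfalso
      rw [huv, flip1_flip1_self] at hnot
      exact hnot hγ
    cases u with
    | inl a =>
      cases v with
      | inl b =>
        have hL : resL (flip1 (flip1 γ (Sum.inl a)) (Sum.inl b))
            = flip1 (flip1 (resL γ) a) b := by
          rw [resL_flip1_inl, resL_flip1_inl]
        have hR : resR (flip1 (flip1 γ (Sum.inl a)) (Sum.inl b)) = resR γ := by
          rw [resR_flip1_inl, resR_flip1_inl]
        have hmemL : flip1 (flip1 (resL γ) a) b ∈ M₁ := by rw [← hL]; exact hmem.1
        have hnotL : flip1 (flip1 (resL γ) a) b ∉ M := by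
          intro hcon
          exact hnot ⟨by rw [show (fun z => flip1 (flip1 γ (Sum.inl a)) (Sum.inl b) (Sum.inl z))
              = resL (flip1 (flip1 γ (Sum.inl a)) (Sum.inl b)) from rfl, hL]; exact hcon,
            by rw [show (fun z => flip1 (flip1 γ (Sum.inl a)) (Sum.inl b) (Sum.inr z))
              = resR (flip1 (flip1 γ (Sum.inl a)) (Sum.inl b)) from rfl, hR]; exact hγ.2⟩
        obtain ⟨ha, hb⟩ := hM₁cond _ hγ.1 hr1 a b hmemL hnotL
        constructor
        · exact ⟨by rw [show (fun z => flip1 γ (Sum.inl a) (Sum.inl z))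
              = resL (flip1 γ (Sum.inl a)) from rfl, resL_flip1_inl]; exact ha,
            by rw [show (fun z => flip1 γ (Sum.inl a) (Sum.inr z))
              = resR (flip1 γ (Sum.inl a)) from rfl, resR_flip1_inl]; exact hγ.2⟩
        · exact ⟨by rw [show (fun z => flip1 γ (Sum.inl b) (Sum.inl z))
              = resL (flip1 γ (Sum.inl b)) from rfl, resL_flip1_inl]; exact hb,
            by rw [show (fun z => flip1 γ (Sum.inl b) (Sum.inr z))
              = resR (flip1 γ (Sum.inl b)) from rfl, resR_flip1_inl]; exact hγ.2⟩
      | inr b =>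
        exfalso
        have hL : resL (flip1 (flip1 γ (Sum.inl a)) (Sum.inr b)) = flip1 (resL γ) a := by
          rw [resL_flip1_inr, resL_flip1_inl]
        have hmemL : flip1 (resL γ) a ∈ M₁ := by rw [← hL]; exact hmem.1
        exact numOnes_flip1_ne (resL γ) a (hM₁even.2 _ hmemL _ hγ₁)
    | inr a =>
      cases v with
      | inl b =>
        exfalso
        have hR : resR (flip1 (flip1 γ (Sum.inr a)) (Sum.inl b)) = flip1 (resR γ) a := by
          rw [resR_flip1_inl, resR_flip1_inr]
        have hmemR : flip1 (resR γ) a ∈ M₂ := by rw [← hR]; exact hmem.2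
        exact numOnes_flip1_ne (resR γ) a (hM₂even.2 _ hmemR _ hγ₂)
      | inr b =>
        have hR : resR (flip1 (flip1 γ (Sum.inr a)) (Sum.inr b))
            = flip1 (flip1 (resR γ) a) b := by
          rw [resR_flip1_inr, resR_flip1_inr]
        have hL : resL (flip1 (flip1 γ (Sum.inr a)) (Sum.inr b)) = resL γ := by
          rw [resL_flip1_inr, resL_flip1_inr]
        have hmemR : flip1 (flip1 (resR γ) a) b ∈ M₂ := by rw [← hR]; exact hmem.2
        have hnotR : flip1 (flip1 (resR γ) a) b ∉ N := by
          intro hcon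
          exact hnot ⟨by rw [show (fun z => flip1 (flip1 γ (Sum.inr a)) (Sum.inr b) (Sum.inl z))
              = resL (flip1 (flip1 γ (Sum.inr a)) (Sum.inr b)) from rfl, hL]; exact hγ.1,
            by rw [show (fun z => flip1 (flip1 γ (Sum.inr a)) (Sum.inr b) (Sum.inr z))
              = resR (flip1 (flip1 γ (Sum.inr a)) (Sum.inr b)) from rfl, hR]; exact hcon⟩
        obtain ⟨ha, hb⟩ := hM₂cond _ hγ.2 hr2 a b hmemR hnotR
        constructor
        · exact ⟨by rw [show (fun z => flip1 γ (Sum.inr a) (Sum.inl z))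
              = resL (flip1 γ (Sum.inr a)) from rfl, resL_flip1_inr]; exact hγ.1,
            by rw [show (fun z => flip1 γ (Sum.inr a) (Sum.inr z))
              = resR (flip1 γ (Sum.inr a)) from rfl, resR_flip1_inr]; exact ha⟩
        · exact ⟨by rw [show (fun z => flip1 γ (Sum.inr b) (Sum.inl z))
              = resL (flip1 γ (Sum.inr b)) from rfl, resL_flip1_inr]; exact hγ.1,
            by rw [show (fun z => flip1 γ (Sum.inr b) (Sum.inr z))
              = resR (flip1 γ (Sum.inr b)) from rfl, resR_flip1_inr]; exact hb⟩
end

section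
/- Let M ⊆ {0,1}^U be a coverable Δ-matroid and let w₁, w₂ ∈ U be distinct variables such that some β ∈ M satisfies β(w₁) = β(w₂). Then the identification M_{w₁=w₂} ⊆ {0,1}^{U ∖ {w₁,w₂}} is a coverable Δ-matroid. -/
section Aux
variable {V : Type*} [DecidableEq V]

lemma flip1_apply (α : V → Bool) (u x : V) : flip1 α u x = if x = u then !α x else α x := by
  simp [flip1, flipS]

lemma flipS_pair_apply (α : V → Bool) (u v x : V) :
    flipS α {u, v} x = if x = u ∨ x = v then !α x else α x := by
  simp [flipS]

lemma flip1_flip1 (α : V → Bool) {u v : V} (h : u ≠ v) :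
    flip1 (flip1 α u) v = flipS α {u, v} := by
  funext x
  simp only [flip1_apply, flipS_pair_apply]
  by_cases h1 : x = u <;> by_cases h2 : x = v <;> simp_all

lemma flip1_flip1_self_s3 (α : V → Bool) (u : V) : flip1 (flip1 α u) u = α := by
  funext x
  simp only [flip1_apply]
  by_cases h : x = u <;> simp [h]

lemma flipS_pair_self (α : V → Bool) (u : V) : flipS α {u, u} = flip1 α u := by
  funext x
  simp [flipS, flip1]

lemma flipS_pair_comm (α : V → Bool) (u v : V) : flipS α {u, v} = flipS α {v, u} := by
  funext x
  simp only [flipS_pair_apply]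
  exact if_congr or_comm rfl rfl

variable [Fintype V]

lemma numOnes_flip1_parity (α : V → Bool) (u : V) :
    numOnes (flip1 α u) % 2 + numOnes α % 2 = 1 := by
  by_cases hu : α u = true
  · have hne : u ∉ Finset.univ.filter fun v => flip1 α u v = true := by
      simp [flip1_apply, hu]
    have hins : (Finset.univ.filter fun v => α v = true)
        = insert u (Finset.univ.filter fun v => flip1 α u v = true) := by
      ext x
      simp only [Finset.mem_insert, Finset.mem_filter, Finset.mem_univ, true_and, flip1_apply]
      by_cases hx : x = u <;> simp_all
    have : numOnes α = numOnes (flip1 α u) + 1 := by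
      rw [numOnes, hins, Finset.card_insert_of_notMem hne]; rfl
    omega
  · have hne : u ∉ Finset.univ.filter fun v => α v = true := by simp [hu]
    have hins : (Finset.univ.filter fun v => flip1 α u v = true)
        = insert u (Finset.univ.filter fun v => α v = true) := by
      ext x
      simp only [Finset.mem_insert, Finset.mem_filter, Finset.mem_univ, true_and, flip1_apply]
      by_cases hx : x = u <;> simp_all
    have : numOnes (flip1 α u) = numOnes α + 1 := by
      rw [numOnes, hins, Finset.card_insert_of_notMem hne]; rfl
    omega

lemma numOnes_flipS_pair_parity (α : V → Bool) {u v : V} (h : u ≠ v) :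
    numOnes (flipS α {u, v}) % 2 = numOnes α % 2 := by
  rw [← flip1_flip1 α h]
  have h1 := numOnes_flip1_parity (flip1 α u) v
  have h2 := numOnes_flip1_parity α u
  omega

end Aux
section Res
set_option linter.unusedSectionVars false
variable {U : Type*} [DecidableEq U]

/-- Restriction of a tuple to the complement of `{w₁, w₂}`. -/
def resId (w₁ w₂ : U) (γ : U → Bool) : {x : U // x ≠ w₁ ∧ x ≠ w₂} → Bool :=
  fun x => γ x.val

variable {w₁ w₂ : U}

lemma val_ne_of_ne {x u : {x : U // x ≠ w₁ ∧ x ≠ w₂}} (h : x ≠ u) : x.val ≠ u.val :=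
  fun hh => h (Subtype.ext hh)

lemma ne_of_val_ne {x u : {x : U // x ≠ w₁ ∧ x ≠ w₂}} (h : x.val ≠ u.val) : x ≠ u :=
  fun hh => h (congrArg Subtype.val hh)

lemma res_flip1 (γ : U → Bool) (u : {x : U // x ≠ w₁ ∧ x ≠ w₂}) :
    resId w₁ w₂ (flip1 γ u.val) = flip1 (resId w₁ w₂ γ) u := by
  funext x
  by_cases h : x = u
  · subst h; simp [resId, flip1_apply]
  · have h' : x.val ≠ u.val := val_ne_of_ne h
    simp [resId, flip1_apply, h, h']

lemma res_flipS_pair (γ : U → Bool) (u v : {x : U // x ≠ w₁ ∧ x ≠ w₂}) :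
    resId w₁ w₂ (flipS γ {u.val, v.val}) = flipS (resId w₁ w₂ γ) {u, v} := by
  funext x
  by_cases hu : x = u
  · subst hu; simp [resId, flipS_pair_apply]
  · by_cases hv : x = v
    · subst hv; simp [resId, flipS_pair_apply]
    · have hu' : x.val ≠ u.val := val_ne_of_ne hu
      have hv' : x.val ≠ v.val := val_ne_of_ne hv
      simp [resId, flipS_pair_apply, hu, hv, hu', hv']

lemma res_congr (γ δ : U → Bool) (h : ∀ x : {x : U // x ≠ w₁ ∧ x ≠ w₂}, γ x.val = δ x.val) :
    resId w₁ w₂ γ = resId w₁ w₂ δ :=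
  funext fun x => h x

lemma res_flipW (γ : U → Bool) : resId w₁ w₂ (flipS γ {w₁, w₂}) = resId w₁ w₂ γ :=
  res_congr _ _ fun x => by simp [flipS_pair_apply, x.prop.1, x.prop.2]

lemma mem_identify_of {M : Set (U → Bool)} {γ : U → Bool} (hγ : γ ∈ M) (h1 : γ w₁ = γ w₂) :
    resId w₁ w₂ γ ∈ identify M w₁ w₂ :=
  ⟨γ, hγ, h1, fun _ => rfl⟩

lemma identify_mem_elim {M : Set (U → Bool)} {g : {x : U // x ≠ w₁ ∧ x ≠ w₂} → Bool}
    (h : g ∈ identify M w₁ w₂) :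
    ∃ γ ∈ M, γ w₁ = γ w₂ ∧ resId w₁ w₂ γ = g := by
  obtain ⟨β, hβ, h1, h2⟩ := h
  exact ⟨β, hβ, h1, funext fun x => (h2 x).symm⟩

lemma bool_eq_not_of_ne {a b : Bool} (h : a ≠ b) : a = !b := by
  cases a <;> cases b <;> simp_all

lemma bool_eq_of_not_ne {a b : Bool} (h : (!a) ≠ b) : a = b := by
  cases a <;> cases b <;> simp_all

lemma two_lifts (hw : w₁ ≠ w₂) {c d : U → Bool} (hc : c w₁ = c w₂) (hd : d w₁ = d w₂)
    (h : resId w₁ w₂ c = resId w₁ w₂ d) : c = d ∨ c = flipS d {w₁, w₂} := by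
  have hx : ∀ x, x ≠ w₁ → x ≠ w₂ → c x = d x := fun x h1 h2 => congrFun h ⟨x, h1, h2⟩
  by_cases h1 : c w₁ = d w₁
  · left
    funext x
    by_cases e1 : x = w₁
    · subst e1; exact h1
    · by_cases e2 : x = w₂
      · subst e2; rw [← hc, ← hd, h1]
      · exact hx x e1 e2
  · right
    have h1' : c w₁ = !d w₁ := bool_eq_not_of_ne h1
    funext x
    by_cases e1 : x = w₁
    · subst e1; simpa [flipS_pair_apply] using h1'
    · by_cases e2 : x = w₂
      · subst e2
        rw [← hc] at *
        simp [flipS_pair_apply, ← hd, h1', e1]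
      · simp [flipS_pair_apply, e1, e2, hx x e1 e2]

lemma flipW_w₁ (γ : U → Bool) : flipS γ {w₁, w₂} w₁ = !γ w₁ := by simp [flipS_pair_apply]

lemma flipW_w₂ (γ : U → Bool) : flipS γ {w₁, w₂} w₂ = !γ w₂ := by simp [flipS_pair_apply]

lemma res_mem_identify_iff (hw : w₁ ≠ w₂) {M : Set (U → Bool)} {γ : U → Bool}
    (h1 : γ w₁ = γ w₂) :
    resId w₁ w₂ γ ∈ identify M w₁ w₂ ↔ (γ ∈ M ∨ flipS γ {w₁, w₂} ∈ M) := by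
  constructor
  · intro h
    obtain ⟨c, hc, hc1, hres⟩ := identify_mem_elim h
    rcases two_lifts hw hc1 h1 hres with rfl | rfl
    · exact Or.inl hc
    · exact Or.inr hc
  · rintro (h | h)
    · exact mem_identify_of h h1
    · have h1' : flipS γ {w₁, w₂} w₁ = flipS γ {w₁, w₂} w₂ := by
        rw [flipW_w₁, flipW_w₂, h1]
      have := mem_identify_of h h1'
      rwa [res_flipW] at this

end Res
section ResPar
set_option linter.unusedSectionVars false
variable {U : Type*} [DecidableEq U] [Fintype U] {w₁ w₂ : U}

lemma numOnes_res (hw : w₁ ≠ w₂) (γ : U → Bool) (h1 : γ w₁ = γ w₂) :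
    numOnes (resId w₁ w₂ γ) % 2 = numOnes γ % 2 := by
  classical
  set A := Finset.univ.filter fun v : U => γ v = true with hA
  have hsplit := Finset.card_filter_add_card_filter_not
    (s := A) (p := fun v => v = w₁ ∨ v = w₂)
  have hres : numOnes (resId w₁ w₂ γ)
      = (A.filter fun v => ¬(v = w₁ ∨ v = w₂)).card := by
    apply Finset.card_bij (fun (x : {x : U // x ≠ w₁ ∧ x ≠ w₂}) _ => x.val)
    · intro x hx
      simp only [hA, Finset.mem_filter, Finset.mem_univ, true_and] at hx ⊢
      simp only [resId] at hx
      exact ⟨hx, by push_neg; exact x.prop⟩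
    · intro x _ y _ h
      exact Subtype.ext h
    · intro b hb
      simp only [hA, Finset.mem_filter, Finset.mem_univ, true_and] at hb
      push_neg at hb
      refine ⟨⟨b, hb.2⟩, ?_, rfl⟩
      exact Finset.mem_filter.2 ⟨Finset.mem_univ _, hb.1⟩
  have hpair : (A.filter fun v => v = w₁ ∨ v = w₂).card % 2 = 0 := by
    by_cases hγ : γ w₁ = true
    · have : (A.filter fun v => v = w₁ ∨ v = w₂) = {w₁, w₂} := by
        ext v
        simp only [hA, Finset.mem_filter, Finset.mem_univ, true_and, Finset.mem_insert,
          Finset.mem_singleton]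
        constructor
        · rintro ⟨_, h⟩; exact h
        · rintro (rfl | rfl)
          · exact ⟨hγ, Or.inl rfl⟩
          · exact ⟨h1 ▸ hγ, Or.inr rfl⟩
      rw [this, Finset.card_pair hw]
    · have hγ2 : ¬ γ w₂ = true := fun h => hγ (h1 ▸ h)
      have : (A.filter fun v => v = w₁ ∨ v = w₂) = ∅ := by
        ext v
        simp only [hA, Finset.mem_filter, Finset.mem_univ, true_and, Finset.notMem_empty,
          iff_false, not_and]
        rintro hv (rfl | rfl)
        · exact hγ hv
        · exact hγ2 hv
      rw [this]; rfl
  have : numOnes γ = A.card := rfl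
  omega
end ResPar
section IdDelta
set_option linter.unusedSectionVars false
variable {U : Type*} [DecidableEq U] {w₁ w₂ : U} {M : Set (U → Bool)}

lemma id_exchange_aux (hM : IsDeltaMatroid M) (hw : w₁ ≠ w₂) {a b : U}
    (hab2 : (a = w₁ ∧ b = w₂) ∨ (a = w₂ ∧ b = w₁))
    {β β' : U → Bool} (hβ : β ∈ M) (hβ' : β' ∈ M) (h1 : β w₁ = β w₂) (h1' : β' w₁ = β' w₂)
    (v : {x : U // x ≠ w₁ ∧ x ≠ w₂}) (hv : β v.val ≠ β' v.val)
    (hba : β a ≠ β' a) (hx : flipS β {a, v.val} ∈ M) :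
    ∃ u, resId w₁ w₂ β u ≠ resId w₁ w₂ β' u ∧
      flipS (resId w₁ w₂ β) {u, v} ∈ identify M w₁ w₂ := by
  have hA : a ≠ b := by
    rcases hab2 with ⟨rfl, rfl⟩ | ⟨rfl, rfl⟩
    exacts [hw, hw.symm]
  have hWiff : ∀ c : U → Bool, c w₁ = c w₂ ↔ c a = c b := by
    rcases hab2 with ⟨rfl, rfl⟩ | ⟨rfl, rfl⟩
    · exact fun c => Iff.rfl
    · exact fun c => eq_comm
  have hva : ∀ x : {x : U // x ≠ w₁ ∧ x ≠ w₂}, x.val ≠ a ∧ x.val ≠ b := by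
    rcases hab2 with ⟨rfl, rfl⟩ | ⟨rfl, rfl⟩
    exacts [fun x => x.prop, fun x => ⟨x.prop.2, x.prop.1⟩]
  have hnab : ∀ y : U, y ≠ a → y ≠ b → y ≠ w₁ ∧ y ≠ w₂ := by
    rcases hab2 with ⟨rfl, rfl⟩ | ⟨rfl, rfl⟩
    exacts [fun y hy1 hy2 => ⟨hy1, hy2⟩, fun y hy1 hy2 => ⟨hy2, hy1⟩]
  have hw1ab : w₁ = a ∨ w₁ = b := by
    rcases hab2 with ⟨rfl, rfl⟩ | ⟨rfl, rfl⟩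
    exacts [Or.inl rfl, Or.inr rfl]
  have hw2ab : w₂ = a ∨ w₂ = b := by
    rcases hab2 with ⟨rfl, rfl⟩ | ⟨rfl, rfl⟩
    exacts [Or.inr rfl, Or.inl rfl]
  have hβab : β a = β b := (hWiff β).1 h1
  have hβ'ab : β' a = β' b := (hWiff β').1 h1'
  have hbb : β b ≠ β' b := fun e => hba (by rw [hβab, e, ← hβ'ab])
  have hbv : b ≠ v.val := fun e => (hva v).2 e.symm
  have hav : a ≠ v.val := fun e => (hva v).1 e.symm
  set η := flipS β {a, v.val} with hη
  have hηb : η b = β b := by simp [hη, flipS, hA.symm, hbv]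
  have hηa : η a = !β a := by simp [hη, flipS]
  have hηv : η v.val = !β v.val := by simp [hη, flipS]
  obtain ⟨y, hy1, hy2⟩ := hM.2 η hx β' hβ' b (by rw [hηb]; exact hbb)
  by_cases hyb : y = b
  · rw [hyb] at hy1 hy2
    refine ⟨v, hv, ?_⟩
    have hζw : flipS η {b, b} w₁ = flipS η {b, b} w₂ := by
      have key : ∀ x, (x = a ∨ x = b) → flipS η {b, b} x = !β x := by
        intro x hx'
        rcases hx' with rfl | rfl
        · simp [flipS, hη, hA, hav]
        · simp [flipS, hη, hA.symm, hbv]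
      rcases hw1ab with e1 | e1 <;> rcases hw2ab with e2 | e2 <;>
        rw [key w₁ (by tauto), key w₂ (by tauto), h1]
    have hres : resId w₁ w₂ (flipS η {b, b}) = flipS (resId w₁ w₂ β) {v, v} := by
      funext x
      by_cases hxv : x = v
      · subst hxv
        simp [resId, flipS, hη, (hva x).2]
      · have hxv' : x.val ≠ v.val := val_ne_of_ne hxv
        simp [resId, flipS, hη, hxv, hxv', (hva x).1, (hva x).2]
    have := mem_identify_of hy2 hζw
    rwa [hres] at this
  · by_cases hya : y = a
    · subst hya
      rw [hηa] at hy1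
      exact absurd (bool_eq_of_not_ne hy1) hba
    · by_cases hyv : y = v.val
      · subst hyv
        rw [hηv] at hy1
        exact absurd (bool_eq_of_not_ne hy1) hv
      · have hyw := hnab y hya hyb
        have hηy : η y = β y := by simp [hη, flipS, hya, hyv]
        refine ⟨⟨y, hyw⟩, ?_, ?_⟩
        · show β y ≠ β' y
          rwa [hηy] at hy1
        · have hζw : flipS η {y, b} w₁ = flipS η {y, b} w₂ := by
            have key : ∀ x, (x = a ∨ x = b) → flipS η {y, b} x = !β x := by
              intro x hx'
              rcases hx' with rfl | rfl
              · simp [flipS, hη, hA, hav, Ne.symm hya]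
              · simp [flipS, hη, hA.symm, hbv, Ne.symm hyb]
            rw [key w₁ hw1ab, key w₂ hw2ab, h1]
          have hres : resId w₁ w₂ (flipS η {y, b})
              = flipS (resId w₁ w₂ β) {⟨y, hyw⟩, v} := by
            funext x
            by_cases hxy : x.val = y
            · have hx1 : x = ⟨y, hyw⟩ := Subtype.ext hxy
              simp [resId, flipS, hη, hxy, hya, hyv, hx1, hyb]
            · by_cases hxv : x = v
              · subst hxv
                have hne1 : x ≠ (⟨y, hyw⟩ : {x : U // x ≠ w₁ ∧ x ≠ w₂}) := ne_of_val_ne hxy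
                simp [resId, flipS, hη, hxy, (hva x).2, hne1]
              · have h1' : x.val ≠ v.val := val_ne_of_ne hxv
                have hne1 : x ≠ (⟨y, hyw⟩ : {x : U // x ≠ w₁ ∧ x ≠ w₂}) := ne_of_val_ne hxy
                simp [resId, flipS, hη, hxy, hxv, h1', hne1,
                  (hva x).1, (hva x).2]
          have := mem_identify_of hy2 hζw
          rwa [hres] at this

lemma identify_isDelta (hM : IsDeltaMatroid M) (hw : w₁ ≠ w₂)
    (hne : ∃ β ∈ M, β w₁ = β w₂) : IsDeltaMatroid (identify M w₁ w₂) := by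
  constructor
  · obtain ⟨β, hβ, h1⟩ := hne
    exact ⟨resId w₁ w₂ β, mem_identify_of hβ h1⟩
  · intro g hg g' hg' v hv
    obtain ⟨β, hβ, h1, rfl⟩ := identify_mem_elim hg
    obtain ⟨β', hβ', h1', rfl⟩ := identify_mem_elim hg'
    have hvv : β v.val ≠ β' v.val := hv
    obtain ⟨x, hx1, hx2⟩ := hM.2 β hβ β' hβ' v.val hvv
    by_cases hxw1 : x = w₁
    · subst hxw1
      exact id_exchange_aux hM hw (Or.inl ⟨rfl, rfl⟩) hβ hβ' h1 h1' v hvv hx1 hx2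
    · by_cases hxw2 : x = w₂
      · subst hxw2
        exact id_exchange_aux hM hw (Or.inr ⟨rfl, rfl⟩) hβ hβ' h1 h1' v hvv hx1 hx2
      · refine ⟨⟨x, hxw1, hxw2⟩, hx1, ?_⟩
        have hxw : flipS β {x, v.val} w₁ = flipS β {x, v.val} w₂ := by
          simp [flipS, Ne.symm hxw1, Ne.symm hxw2,
            Ne.symm v.prop.1, Ne.symm v.prop.2, h1]
        have := mem_identify_of hx2 hxw
        rwa [res_flipS_pair β ⟨x, hxw1, hxw2⟩ v] at this

end IdDelta
section Lift
set_option linter.unusedSectionVars false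
variable {U : Type*} [DecidableEq U] {w₁ w₂ : U} {M : Set (U → Bool)}

lemma lift_step_aux (hM : IsDeltaMatroid M) (hw : w₁ ≠ w₂) {a b : U}
    (hab2 : (a = w₁ ∧ b = w₂) ∨ (a = w₂ ∧ b = w₁))
    {β : U → Bool} (hβ : β ∈ M) (u v : {x : U // x ≠ w₁ ∧ x ≠ w₂}) (huv : u.val ≠ v.val)
    (hu1 : flip1 β u.val ∉ M)
    (hu2 : flipS β {u.val, w₁, w₂} ∉ M)
    (hη : flipS β {a, u.val} ∈ M)
    (hb2 : flipS β {u.val, v.val, w₁, w₂} ∈ M) :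
    Reachable M β (flipS β {u.val, v.val, w₁, w₂}) := by
  have hua : u.val ≠ a := by rcases hab2 with ⟨rfl, rfl⟩ | ⟨rfl, rfl⟩; exacts [u.prop.1, u.prop.2]
  have hub : u.val ≠ b := by rcases hab2 with ⟨rfl, rfl⟩ | ⟨rfl, rfl⟩; exacts [u.prop.2, u.prop.1]
  have hva : v.val ≠ a := by rcases hab2 with ⟨rfl, rfl⟩ | ⟨rfl, rfl⟩; exacts [v.prop.1, v.prop.2]
  have hvb : v.val ≠ b := by rcases hab2 with ⟨rfl, rfl⟩ | ⟨rfl, rfl⟩; exacts [v.prop.2, v.prop.1]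
  have hA : a ≠ b := by rcases hab2 with ⟨rfl, rfl⟩ | ⟨rfl, rfl⟩; exacts [hw, hw.symm]
  have hmemab : ∀ x : U, (x = w₁ ∨ x = w₂) ↔ (x = a ∨ x = b) := by
    rcases hab2 with ⟨rfl, rfl⟩ | ⟨rfl, rfl⟩
    exacts [fun x => Iff.rfl, fun x => or_comm]
  have e0 : flipS β {a, u.val} = flip1 (flip1 β u.val) a := by
    rw [flip1_flip1 β (Ne.symm hua).symm, flipS_pair_comm]
  have e1 : flip1 (flipS β {a, u.val}) b = flipS β {u.val, w₁, w₂} := by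
    funext x
    simp only [flip1_apply, flipS, Finset.mem_insert, Finset.mem_singleton, hmemab]
    by_cases hxa : x = a <;> by_cases hxb : x = b <;> by_cases hxu : x = u.val <;> simp_all
  have e2 : flip1 (flip1 (flipS β {a, u.val}) b) v.val = flipS β {u.val, v.val, w₁, w₂} := by
    rw [e1]
    funext x
    simp only [flip1_apply, flipS, Finset.mem_insert, Finset.mem_singleton, hmemab]
    by_cases hxv : x = v.val <;> by_cases hxu : x = u.val <;>
      by_cases hxa : x = a <;> by_cases hxb : x = b <;> simp_all
  have step1 : EvenNeighbors M β (flipS β {a, u.val}) := ⟨u.val, a, hua, e0, hu1⟩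
  have step2 : EvenNeighbors M (flipS β {a, u.val}) (flipS β {u.val, v.val, w₁, w₂}) :=
    ⟨b, v.val, Ne.symm hvb, e2.symm, by rw [e1]; exact hu2⟩
  exact Relation.ReflTransGen.tail
    (Relation.ReflTransGen.single ⟨hβ, hη, step1⟩) ⟨hη, hb2, step2⟩

lemma lift_step (hM : IsDeltaMatroid M) (hw : w₁ ≠ w₂)
    {β : U → Bool} (hβ : β ∈ M) (h1 : β w₁ = β w₂)
    {γ' : {x : U // x ≠ w₁ ∧ x ≠ w₂} → Bool}
    (hstep : EvenNeighbors (identify M w₁ w₂) (resId w₁ w₂ β) γ')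
    (hγ' : γ' ∈ identify M w₁ w₂) :
    ∃ γ ∈ M, γ w₁ = γ w₂ ∧ resId w₁ w₂ γ = γ' ∧ Reachable M β γ := by
  obtain ⟨u, v, huv, hγeq, hmid⟩ := hstep
  have huv' : u.val ≠ v.val := val_ne_of_ne huv
  have hγ'2 : γ' = flipS (resId w₁ w₂ β) {u, v} := by rw [hγeq, flip1_flip1 _ huv]
  have hmld : resId w₁ w₂ (flip1 β u.val) ∉ identify M w₁ w₂ := by rwa [res_flip1]
  have h1u : flip1 β u.val w₁ = flip1 β u.val w₂ := by
    simp [flip1_apply, Ne.symm u.prop.1, Ne.symm u.prop.2, h1]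
  rw [res_mem_identify_iff hw h1u] at hmld
  push_neg at hmld
  have eW : flipS (flip1 β u.val : U → Bool) {w₁, w₂} = flipS β {u.val, w₁, w₂} := by
    have hp1 := u.prop.1
    have hp2 := u.prop.2
    funext x
    simp only [flip1_apply, flipS, Finset.mem_insert, Finset.mem_singleton]
    by_cases hx1 : x = w₁ <;> by_cases hx2 : x = w₂ <;> by_cases hxu : x = u.val <;> simp_all
  rw [eW] at hmld
  by_cases hc1 : flipS β {u.val, v.val} ∈ M
  · refine ⟨flipS β {u.val, v.val}, hc1, ?_, ?_, ?_⟩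
    · simp [flipS, Ne.symm u.prop.1, Ne.symm u.prop.2, Ne.symm v.prop.1, Ne.symm v.prop.2, h1]
    · rw [res_flipS_pair, hγ'2]
    · exact Relation.ReflTransGen.single
        ⟨hβ, hc1, u.val, v.val, huv', (flip1_flip1 β huv').symm, hmld.1⟩
  · obtain ⟨c, hc, hcw, hcres⟩ := identify_mem_elim hγ'
    have hfw : flipS β {u.val, v.val} w₁ = flipS β {u.val, v.val} w₂ := by
      simp [flipS, Ne.symm u.prop.1, Ne.symm u.prop.2, Ne.symm v.prop.1, Ne.symm v.prop.2, h1]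
    have hres2 : resId w₁ w₂ c = resId w₁ w₂ (flipS β {u.val, v.val}) := by
      rw [hcres, hγ'2, res_flipS_pair]
    rcases two_lifts hw hcw hfw hres2 with rfl | hcc
    · exact absurd hc hc1
    · have hb2eq : flipS (flipS β {u.val, v.val} : U → Bool) {w₁, w₂}
          = flipS β {u.val, v.val, w₁, w₂} := by
        funext x
        simp only [flipS, Finset.mem_insert, Finset.mem_singleton]
        by_cases hx1 : x = w₁ <;> by_cases hx2 : x = w₂ <;> by_cases hxu : x = u.val <;>
          by_cases hxv : x = v.val <;> simp_all [u.prop.1, u.prop.2, v.prop.1, v.prop.2]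
      rw [hcc, hb2eq] at hc
      have hbu : β u.val ≠ flipS β {u.val, v.val, w₁, w₂} u.val := by
        simp [flipS]
      obtain ⟨x, hx1, hx2⟩ := hM.2 β hβ _ hc u.val hbu
      have hxmem : x = u.val ∨ x = v.val ∨ x = w₁ ∨ x = w₂ := by
        by_contra hcon
        push_neg at hcon
        apply hx1
        simp [flipS, hcon.1, hcon.2.1, hcon.2.2.1, hcon.2.2.2]
      have hgoal2 : flipS β {u.val, v.val, w₁, w₂} w₁ = flipS β {u.val, v.val, w₁, w₂} w₂ := by
        simp [flipS, Ne.symm u.prop.1, Ne.symm u.prop.2, Ne.symm v.prop.1, Ne.symm v.prop.2, h1]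
      have hgoal3 : resId w₁ w₂ (flipS β {u.val, v.val, w₁, w₂}) = γ' := by
        rw [hγ'2, ← res_flipS_pair]
        apply res_congr
        intro x
        simp [flipS, x.prop.1, x.prop.2]
      rcases hxmem with rfl | rfl | rfl | rfl
      · rw [flipS_pair_self] at hx2
        exact absurd hx2 hmld.1
      · rw [flipS_pair_comm] at hx2
        exact absurd hx2 hc1
      · exact ⟨_, hc, hgoal2, hgoal3,
          lift_step_aux hM hw (Or.inl ⟨rfl, rfl⟩) hβ u v huv' hmld.1 hmld.2
            hx2 hc⟩
      · exact ⟨_, hc, hgoal2, hgoal3,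
          lift_step_aux hM hw (Or.inr ⟨rfl, rfl⟩) hβ u v huv' hmld.1 hmld.2
            hx2 hc⟩

lemma lift_reach (hM : IsDeltaMatroid M) (hw : w₁ ≠ w₂)
    {α : U → Bool} (hα : α ∈ M) (h1 : α w₁ = α w₂)
    {γ' : {x : U // x ≠ w₁ ∧ x ≠ w₂} → Bool}
    (h : Reachable (identify M w₁ w₂) (resId w₁ w₂ α) γ') :
    ∃ γ ∈ M, γ w₁ = γ w₂ ∧ resId w₁ w₂ γ = γ' ∧ Reachable M α γ := by
  induction h with
  | refl => exact ⟨α, hα, h1, rfl, Relation.ReflTransGen.refl⟩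
  | tail hab hstep ih =>
    obtain ⟨β, hβ, hβ1, hβres, hβreach⟩ := ih
    obtain ⟨hbN, hcN, hEN⟩ := hstep
    rw [← hβres] at hEN
    obtain ⟨γ, hγ, hγ1, hγres, hγreach⟩ := lift_step hM hw hβ hβ1 hEN hcN
    exact ⟨γ, hγ, hγ1, hγres, hβreach.trans hγreach⟩

end Lift
section Cond3
set_option linter.unusedSectionVars false
variable {U : Type*} [DecidableEq U] [Fintype U] {w₁ w₂ : U} {M : Set (U → Bool)}
  {α : U → Bool} {Mα : Set (U → Bool)}

lemma flipW_flip1 (hw : w₁ ≠ w₂) (γ : U → Bool) (u : {x : U // x ≠ w₁ ∧ x ≠ w₂}) :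
    flipS (flip1 γ u.val : U → Bool) {w₁, w₂} = flipS γ {u.val, w₁, w₂} := by
  have hp1 := u.prop.1
  have hp2 := u.prop.2
  funext x
  simp only [flip1_apply, flipS, Finset.mem_insert, Finset.mem_singleton]
  by_cases hx1 : x = w₁ <;> by_cases hx2 : x = w₂ <;> by_cases hxu : x = u.val <;> simp_all

lemma flipW_pair (hw : w₁ ≠ w₂) (γ : U → Bool) (u v : {x : U // x ≠ w₁ ∧ x ≠ w₂}) :
    flipS (flipS γ {u.val, v.val} : U → Bool) {w₁, w₂} = flipS γ {u.val, v.val, w₁, w₂} := by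
  have hp1 := u.prop.1
  have hp2 := u.prop.2
  have hq1 := v.prop.1
  have hq2 := v.prop.2
  funext x
  simp only [flipS, Finset.mem_insert, Finset.mem_singleton]
  by_cases hx1 : x = w₁ <;> by_cases hx2 : x = w₂ <;> by_cases hxu : x = u.val <;>
    by_cases hxv : x = v.val <;> simp_all

lemma quad_comm (γ : U → Bool) (p q r s : U) :
    flipS γ {p, q, r, s} = flipS γ {q, p, r, s} := by
  funext x
  simp only [flipS, Finset.mem_insert, Finset.mem_singleton]
  by_cases h1 : x = p <;> by_cases h2 : x = q <;> simp_all [or_comm, or_assoc, or_left_comm]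

lemma cond3_aux (hw : w₁ ≠ w₂)
    (hcov3 : ∀ γ ∈ M, Reachable M α γ → ∀ u v,
      flip1 (flip1 γ u) v ∈ Mα → flip1 (flip1 γ u) v ∉ M →
      flip1 γ u ∈ M ∧ flip1 γ v ∈ M)
    {a b : U} (hab2 : (a = w₁ ∧ b = w₂) ∨ (a = w₂ ∧ b = w₁))
    {γ : U → Bool} (hγM : γ ∈ M) (hreach : Reachable M α γ)
    (u v : {x : U // x ≠ w₁ ∧ x ≠ w₂}) (huv : u.val ≠ v.val)
    (hu : flip1 γ u.val ∉ M)
    (huw : flipS γ {u.val, w₁, w₂} ∉ M)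
    (hδM : flipS γ {u.val, v.val, w₁, w₂} ∉ M)
    (hδα : flipS γ {u.val, v.val, w₁, w₂} ∈ Mα)
    (hηα : flipS γ {u.val, a} ∈ Mα) : False := by
  have hua : u.val ≠ a := by rcases hab2 with ⟨rfl, rfl⟩ | ⟨rfl, rfl⟩; exacts [u.prop.1, u.prop.2]
  have hub : u.val ≠ b := by rcases hab2 with ⟨rfl, rfl⟩ | ⟨rfl, rfl⟩; exacts [u.prop.2, u.prop.1]
  have hva : v.val ≠ a := by rcases hab2 with ⟨rfl, rfl⟩ | ⟨rfl, rfl⟩; exacts [v.prop.1, v.prop.2]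
  have hvb : v.val ≠ b := by rcases hab2 with ⟨rfl, rfl⟩ | ⟨rfl, rfl⟩; exacts [v.prop.2, v.prop.1]
  have hA : a ≠ b := by rcases hab2 with ⟨rfl, rfl⟩ | ⟨rfl, rfl⟩; exacts [hw, hw.symm]
  have hmemab : ∀ x : U, (x = w₁ ∨ x = w₂) ↔ (x = a ∨ x = b) := by
    rcases hab2 with ⟨rfl, rfl⟩ | ⟨rfl, rfl⟩
    exacts [fun x => Iff.rfl, fun x => or_comm]
  have e0 : flip1 (flip1 γ u.val) a = flipS γ {u.val, a} := flip1_flip1 γ hua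
  have e1 : flip1 (flipS γ {u.val, a}) b = flipS γ {u.val, w₁, w₂} := by
    funext x
    simp only [flip1_apply, flipS, Finset.mem_insert, Finset.mem_singleton, hmemab]
    by_cases hxa : x = a <;> by_cases hxb : x = b <;> by_cases hxu : x = u.val <;> simp_all
  have e2 : flip1 (flip1 (flipS γ {u.val, a}) b) v.val = flipS γ {u.val, v.val, w₁, w₂} := by
    rw [e1]
    funext x
    simp only [flip1_apply, flipS, Finset.mem_insert, Finset.mem_singleton, hmemab]
    by_cases hxv : x = v.val <;> by_cases hxu : x = u.val <;>
      by_cases hxa : x = a <;> by_cases hxb : x = b <;> simp_all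
  by_cases hηM : flipS γ {u.val, a} ∈ M
  · have hstep : EvenNeighbors M γ (flipS γ {u.val, a}) := ⟨u.val, a, hua, e0.symm, hu⟩
    have hreach2 : Reachable M α (flipS γ {u.val, a}) :=
      Relation.ReflTransGen.tail hreach ⟨hγM, hηM, hstep⟩
    have := hcov3 _ hηM hreach2 b v.val (by rw [e2]; exact hδα) (by rw [e2]; exact hδM)
    exact huw (by rw [← e1]; exact this.1)
  · have := hcov3 γ hγM hreach u.val a (by rw [e0]; exact hηα) (by rw [e0]; exact hηM)
    exact hu this.1

lemma cond3_half (hw : w₁ ≠ w₂) (hMαe : IsEvenDeltaMatroid Mα)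
    (hcov3 : ∀ γ ∈ M, Reachable M α γ → ∀ u v,
      flip1 (flip1 γ u) v ∈ Mα → flip1 (flip1 γ u) v ∉ M →
      flip1 γ u ∈ M ∧ flip1 γ v ∈ M)
    {γ : U → Bool} (hγM : γ ∈ M) (hγα : γ ∈ Mα) (hreach : Reachable M α γ)
    (h1 : γ w₁ = γ w₂)
    (u v : {x : U // x ≠ w₁ ∧ x ≠ w₂}) (huv : u.val ≠ v.val)
    (huvM : flipS γ {u.val, v.val} ∉ M)
    (hδα : flipS γ {u.val, v.val, w₁, w₂} ∈ Mα)
    (hδM : flipS γ {u.val, v.val, w₁, w₂} ∉ M) :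
    resId w₁ w₂ (flip1 γ u.val) ∈ identify M w₁ w₂ := by
  by_contra hcon
  have h1u : flip1 γ u.val w₁ = flip1 γ u.val w₂ := by
    simp [flip1_apply, Ne.symm u.prop.1, Ne.symm u.prop.2, h1]
  rw [res_mem_identify_iff hw h1u] at hcon
  push_neg at hcon
  rw [flipW_flip1 hw γ u] at hcon
  have hne : γ u.val ≠ flipS γ {u.val, v.val, w₁, w₂} u.val := by simp [flipS]
  obtain ⟨x, hx1, hx2⟩ := hMαe.1.2 γ hγα _ hδα u.val hne
  have hxmem : x = u.val ∨ x = v.val ∨ x = w₁ ∨ x = w₂ := by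
    by_contra hcon'
    push_neg at hcon'
    apply hx1
    simp [flipS, hcon'.1, hcon'.2.1, hcon'.2.2.1, hcon'.2.2.2]
  rcases hxmem with rfl | rfl | rfl | rfl
  · rw [flipS_pair_self] at hx2
    have hpar := hMαe.2 γ hγα _ hx2
    have hp := numOnes_flip1_parity γ u.val
    omega
  · rw [flipS_pair_comm] at hx2
    rw [← flip1_flip1 γ huv] at hx2
    have := hcov3 γ hγM hreach u.val v.val hx2
      (by rw [flip1_flip1 γ huv]; exact huvM)
    exact hcon.1 this.1
  · rw [flipS_pair_comm] at hx2
    exact cond3_aux hw hcov3 (Or.inl ⟨rfl, rfl⟩) hγM hreach u v huv hcon.1 hcon.2 hδM hδα hx2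
  · rw [flipS_pair_comm] at hx2
    exact cond3_aux hw hcov3 (Or.inr ⟨rfl, rfl⟩) hγM hreach u v huv hcon.1 hcon.2 hδM hδα hx2

lemma identify_even (hw : w₁ ≠ w₂) (hMαe : IsEvenDeltaMatroid Mα)
    (hne' : ∃ β ∈ Mα, β w₁ = β w₂) : IsEvenDeltaMatroid (identify Mα w₁ w₂) := by
  refine ⟨identify_isDelta hMαe.1 hw hne', ?_⟩
  intro g hg g' hg'
  obtain ⟨β, hβ, h1, rfl⟩ := identify_mem_elim hg
  obtain ⟨β', hβ', h1', rfl⟩ := identify_mem_elim hg'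
  rw [numOnes_res hw β h1, numOnes_res hw β' h1']
  exact hMαe.2 β hβ β' hβ'

end Cond3
/-- Identifying two distinct variables of a coverable Δ-matroid (such that some tuple of
`M` agrees on the two variables) yields a coverable Δ-matroid. -/
theorem identify_coverable {U : Type} [Fintype U] [DecidableEq U]
    (M : Set (U → Bool)) (hM : IsDeltaMatroid M) (hMc : Coverable M)
    (w₁ w₂ : U) (hw : w₁ ≠ w₂) (hne : ∃ β ∈ M, β w₁ = β w₂) :
    IsDeltaMatroid (identify M w₁ w₂) ∧ Coverable (identify M w₁ w₂) := by
  refine ⟨identify_isDelta hM hw hne, ?_⟩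
  intro α' hα'
  obtain ⟨α, hαM, hα1, rfl⟩ := identify_mem_elim hα'
  obtain ⟨Mα, hMαe, hcov2, hcov3⟩ := hMc α hαM
  have hαα : α ∈ Mα := hcov2 α hαM Relation.ReflTransGen.refl
  refine ⟨identify Mα w₁ w₂, identify_even hw hMαe ⟨α, hαα, hα1⟩, ?_, ?_⟩
  · intro β' hβ' hreach'
    obtain ⟨γ, hγ, hγ1, hγres, hγreach⟩ := lift_reach hM hw hαM hα1 hreach'
    rw [← hγres]
    exact mem_identify_of (hcov2 γ hγ hγreach) hγ1
  · intro γ' hγ'N hreach' u v hflipα hflipN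
    have huv : u ≠ v := by
      rintro rfl
      rw [flip1_flip1_self_s3] at hflipN
      exact hflipN hγ'N
    have huv' : u.val ≠ v.val := val_ne_of_ne huv
    obtain ⟨γ, hγM, hγ1, rfl, hγreach⟩ := lift_reach hM hw hαM hα1 hreach'
    have hγα : γ ∈ Mα := hcov2 γ hγM hγreach
    have hflip_eq : flip1 (flip1 (resId w₁ w₂ γ) u) v = resId w₁ w₂ (flipS γ {u.val, v.val}) := by
      rw [flip1_flip1 _ huv, res_flipS_pair]
    rw [hflip_eq] at hflipα hflipN
    have hfw : flipS γ {u.val, v.val} w₁ = flipS γ {u.val, v.val} w₂ := by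
      simp [flipS, Ne.symm u.prop.1, Ne.symm u.prop.2, Ne.symm v.prop.1, Ne.symm v.prop.2, hγ1]
    rw [res_mem_identify_iff hw hfw] at hflipN
    push_neg at hflipN
    rw [flipW_pair hw γ u v] at hflipN
    obtain ⟨d, hdα, hdw, hdres⟩ := identify_mem_elim hflipα
    rcases two_lifts hw hdw hfw hdres with rfl | hdd
    · -- d = γ ⊕ {u, v} ∈ Mα \ M : use the cover property directly
      have := hcov3 γ hγM hγreach u.val v.val
        (by rw [flip1_flip1 _ huv']; exact hdα)
        (by rw [flip1_flip1 _ huv']; exact hflipN.1)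
      constructor
      · rw [← res_flip1]
        exact mem_identify_of this.1
          (by simp [flip1_apply, Ne.symm u.prop.1, Ne.symm u.prop.2, hγ1])
      · rw [← res_flip1]
        exact mem_identify_of this.2
          (by simp [flip1_apply, Ne.symm v.prop.1, Ne.symm v.prop.2, hγ1])
    · -- d = γ ⊕ {u, v, w₁, w₂} ∈ Mα \ M
      rw [flipW_pair hw γ u v] at hdd
      rw [hdd] at hdα
      constructor
      · rw [← res_flip1]
        exact cond3_half hw hMαe hcov3 hγM hγα hγreach hγ1 u v huv' hflipN.1 hdα hflipN.2
      · rw [← res_flip1]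
        have hswap : flipS γ {v.val, u.val, w₁, w₂} = flipS γ {u.val, v.val, w₁, w₂} :=
          quad_comm γ v.val u.val w₁ w₂
        refine cond3_half hw hMαe hcov3 hγM hγα hγreach hγ1 v u (Ne.symm huv') ?_ ?_ ?_
        · rw [flipS_pair_comm]; exact hflipN.1
        · rw [hswap]; exact hdα
        · rw [hswap]; exact hflipN.2
end

section
/- Let M ⊆ {0,1}^U and N ⊆ {0,1}^V be Δ-matroids on disjoint finite ground sets. If (α,β) and (γ,δ) are even-neighbors in the direct product M × N, then either α = γ and β, δ are even-neighbors in N, or β = δ and α, γ are even-neighbors in M. -/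
lemma flip1_elim_inl {U V : Type} [DecidableEq U] [DecidableEq V]
    (α : U → Bool) (β : V → Bool) (u : U) :
    flip1 (Sum.elim α β) (Sum.inl u) = Sum.elim (flip1 α u) β := by
  funext x
  cases x with
  | inl x => simp [flip1, flipS]
  | inr x => simp [flip1, flipS]

lemma flip1_elim_inr {U V : Type} [DecidableEq U] [DecidableEq V]
    (α : U → Bool) (β : V → Bool) (v : V) :
    flip1 (Sum.elim α β) (Sum.inr v) = Sum.elim α (flip1 β v) := by
  funext x
  cases x with
  | inl x => simp [flip1, flipS]
  | inr x => simp [flip1, flipS]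

lemma elim_eq_iff {U V : Type} (α γ : U → Bool) (β δ : V → Bool)
    (h : Sum.elim α β = Sum.elim γ δ) : α = γ ∧ β = δ := by
  constructor
  · funext x; exact congrFun h (Sum.inl x)
  · funext x; exact congrFun h (Sum.inr x)

lemma elim_mem_prodSet {U V : Type} (M : Set (U → Bool)) (N : Set (V → Bool))
    (α : U → Bool) (β : V → Bool) :
    Sum.elim α β ∈ prodSet M N ↔ α ∈ M ∧ β ∈ N := by
  simp [prodSet]

/-- If `(α,β)` and `(γ,δ)` are even-neighbors in the direct product `M × N` of two
Δ-matroids on disjoint ground sets, then either `α = γ` and `β, δ` are even-neighbors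
in `N`, or `β = δ` and `α, γ` are even-neighbors in `M`. -/
theorem evenNeighbors_prodSet {U V : Type} [DecidableEq U] [DecidableEq V]
    (M : Set (U → Bool)) (N : Set (V → Bool))
    (hM : IsDeltaMatroid M) (hN : IsDeltaMatroid N)
    (α γ : U → Bool) (β δ : V → Bool)
    (hαβ : Sum.elim α β ∈ prodSet M N) (hγδ : Sum.elim γ δ ∈ prodSet M N)
    (h : EvenNeighbors (prodSet M N) (Sum.elim α β) (Sum.elim γ δ)) :
    (α = γ ∧ EvenNeighbors N β δ) ∨ (β = δ ∧ EvenNeighbors M α γ) := by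
  obtain ⟨u, v, huv, heq, hnot⟩ := h
  rw [elim_mem_prodSet] at hαβ hγδ
  cases u with
  | inl u₀ =>
    rw [flip1_elim_inl, elim_mem_prodSet] at hnot
    have hαu : flip1 α u₀ ∉ M := fun hm => hnot ⟨hm, hαβ.2⟩
    cases v with
    | inl v₀ =>
      rw [flip1_elim_inl, flip1_elim_inl] at heq
      obtain ⟨hγ, hδ⟩ := elim_eq_iff _ _ _ _ heq
      exact Or.inr ⟨hδ.symm, u₀, v₀, fun e => huv (by rw [e]), hγ, hαu⟩
    | inr v₀ =>
      rw [flip1_elim_inl, flip1_elim_inr] at heq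
      obtain ⟨hγ, hδ⟩ := elim_eq_iff _ _ _ _ heq
      exact absurd (hγ ▸ hγδ.1) hαu
  | inr u₀ =>
    rw [flip1_elim_inr, elim_mem_prodSet] at hnot
    have hβu : flip1 β u₀ ∉ N := fun hn => hnot ⟨hαβ.1, hn⟩
    cases v with
    | inl v₀ =>
      rw [flip1_elim_inr, flip1_elim_inl] at heq
      obtain ⟨hγ, hδ⟩ := elim_eq_iff _ _ _ _ heq
      exact absurd (hδ ▸ hγδ.2) hβu
    | inr v₀ =>
      rw [flip1_elim_inr, flip1_elim_inr] at heq
      obtain ⟨hγ, hδ⟩ := elim_eq_iff _ _ _ _ heq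
      exact Or.inl ⟨hγ.symm, u₀, v₀, fun e => huv (by rw [e]), hδ, hβu⟩
end

section
/- Let M = {(0,0,0), (1,1,0), (1,0,1), (0,1,1), (1,1,1)} ⊆ {0,1}^3 and let N = M × M ⊆ {0,1}^6 be the direct product of two disjoint copies of M. Then N is a coverable Δ-matroid but N is not an even-zebra. In particular, the class of coverable Δ-matroids properly contains the class of even-zebras, and even-zebras are not closed under direct products. -/
/-- The 5-tuple Δ-matroid `M = {000, 110, 101, 011, 111}` on three variables. -/
def M3 : Set (Fin 3 → Bool) :=
  {![false, false, false], ![true, true, false], ![true, false, true],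
   ![false, true, true], ![true, true, true]}

/-! ### Auxiliary definitions and decidability instances -/

/-- The even part of `M3`. -/
def E3 : Set (Fin 3 → Bool) :=
  {![false, false, false], ![true, true, false], ![true, false, true], ![false, true, true]}

/-- The odd part of `M3`. -/
def T3 : Set (Fin 3 → Bool) :=
  {![true, true, true]}

instance : DecidablePred (· ∈ M3) := fun α =>
  decidable_of_iff (α = ![false,false,false] ∨ α = ![true,true,false] ∨ α = ![true,false,true]
    ∨ α = ![false,true,true] ∨ α = ![true,true,true]) Iff.rfl

instance : DecidablePred (· ∈ E3) := fun α =>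
  decidable_of_iff (α = ![false,false,false] ∨ α = ![true,true,false] ∨ α = ![true,false,true]
    ∨ α = ![false,true,true]) Iff.rfl

instance : DecidablePred (· ∈ T3) := fun α =>
  decidable_of_iff (α = ![true,true,true]) Iff.rfl

instance decProdSet {U V : Type*} (M : Set (U → Bool)) (P : Set (V → Bool))
    [DecidablePred (· ∈ M)] [DecidablePred (· ∈ P)] :
    DecidablePred (· ∈ prodSet M P) := fun h =>
  decidable_of_iff ((fun u => h (Sum.inl u)) ∈ M ∧ (fun v => h (Sum.inr v)) ∈ P) Iff.rfl

/-- The all-ones tuple of length 6, as a singleton set. -/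
def S1 : Set (Fin 3 ⊕ Fin 3 → Bool) := {Sum.elim ![true,true,true] ![true,true,true]}

instance : DecidablePred (· ∈ S1) := fun h =>
  decidable_of_iff (h = Sum.elim ![true,true,true] ![true,true,true]) Iff.rfl

/-! ### A generic construction of a cover -/

/-- If `C` is closed under single even-neighbor steps in `N = M3 × M3`, then it contains
everything reachable from any of its elements. -/
lemma cover_closed {C : Set (Fin 3 ⊕ Fin 3 → Bool)}
    (hcl : ∀ x ∈ C, ∀ u v : Fin 3 ⊕ Fin 3, x ∈ prodSet M3 M3 →
      flip1 (flip1 x u) v ∈ prodSet M3 M3 → u ≠ v → flip1 x u ∉ prodSet M3 M3 →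
      flip1 (flip1 x u) v ∈ C)
    {α β : Fin 3 ⊕ Fin 3 → Bool} (hαC : α ∈ C)
    (h : Reachable (prodSet M3 M3) α β) : β ∈ C := by
  unfold Reachable at h
  induction h with
  | refl => exact hαC
  | tail h1 h2 ih =>
      obtain ⟨hx, hy, hev⟩ := h2
      unfold EvenNeighbors at hev
      obtain ⟨u, v, huv, heq, hnu⟩ := hev
      subst heq
      exact hcl _ ih u v hx hy huv hnu

/-- A step-closed even Δ-matroid `C ⊆ N` containing `α` witnesses the coverability
condition at `α`. -/
lemma pick {C : Set (Fin 3 ⊕ Fin 3 → Bool)} (hd : IsEvenDeltaMatroid C)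
    (hcl : ∀ x ∈ C, ∀ u v : Fin 3 ⊕ Fin 3, x ∈ prodSet M3 M3 →
      flip1 (flip1 x u) v ∈ prodSet M3 M3 → u ≠ v → flip1 x u ∉ prodSet M3 M3 →
      flip1 (flip1 x u) v ∈ C)
    (hsub : ∀ x ∈ C, x ∈ prodSet M3 M3)
    {α : Fin 3 ⊕ Fin 3 → Bool} (hαC : α ∈ C) :
    ∃ Mα : Set (Fin 3 ⊕ Fin 3 → Bool),
      IsEvenDeltaMatroid Mα ∧
      (∀ β ∈ prodSet M3 M3, Reachable (prodSet M3 M3) α β → β ∈ Mα) ∧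
      (∀ γ ∈ prodSet M3 M3, Reachable (prodSet M3 M3) α γ → ∀ u v,
        flip1 (flip1 γ u) v ∈ Mα → flip1 (flip1 γ u) v ∉ prodSet M3 M3 →
        flip1 γ u ∈ prodSet M3 M3 ∧ flip1 γ v ∈ prodSet M3 M3) :=
  ⟨C, hd, fun β _ hr => cover_closed hcl hαC hr,
    fun γ _ _ u v hm hn => absurd (hsub _ hm) hn⟩

/-! ### The four covers used for `N = M3 × M3` -/

set_option maxRecDepth 40000 in
lemma EE_delta : IsEvenDeltaMatroid (prodSet E3 E3) :=
  ⟨⟨⟨Sum.elim ![false,false,false] ![false,false,false], by decide⟩, by decide⟩, by decide⟩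

set_option maxRecDepth 40000 in
lemma EE_closed : ∀ x ∈ prodSet E3 E3, ∀ u v : Fin 3 ⊕ Fin 3, x ∈ prodSet M3 M3 →
    flip1 (flip1 x u) v ∈ prodSet M3 M3 → u ≠ v → flip1 x u ∉ prodSet M3 M3 →
    flip1 (flip1 x u) v ∈ prodSet E3 E3 := by decide

set_option maxRecDepth 40000 in
lemma EE_sub : ∀ x ∈ prodSet E3 E3, x ∈ prodSet M3 M3 := by decide

set_option maxRecDepth 40000 in
lemma C1_delta : IsEvenDeltaMatroid (prodSet E3 T3) :=
  ⟨⟨⟨Sum.elim ![false,false,false] ![true,true,true], by decide⟩, by decide⟩, by decide⟩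

set_option maxRecDepth 40000 in
lemma C1_closed : ∀ x ∈ prodSet E3 T3, ∀ u v : Fin 3 ⊕ Fin 3, x ∈ prodSet M3 M3 →
    flip1 (flip1 x u) v ∈ prodSet M3 M3 → u ≠ v → flip1 x u ∉ prodSet M3 M3 →
    flip1 (flip1 x u) v ∈ prodSet E3 T3 := by decide

set_option maxRecDepth 40000 in
lemma C1_sub : ∀ x ∈ prodSet E3 T3, x ∈ prodSet M3 M3 := by decide

set_option maxRecDepth 40000 in
lemma C2_delta : IsEvenDeltaMatroid (prodSet T3 E3) :=
  ⟨⟨⟨Sum.elim ![true,true,true] ![false,false,false], by decide⟩, by decide⟩, by decide⟩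

set_option maxRecDepth 40000 in
lemma C2_closed : ∀ x ∈ prodSet T3 E3, ∀ u v : Fin 3 ⊕ Fin 3, x ∈ prodSet M3 M3 →
    flip1 (flip1 x u) v ∈ prodSet M3 M3 → u ≠ v → flip1 x u ∉ prodSet M3 M3 →
    flip1 (flip1 x u) v ∈ prodSet T3 E3 := by decide

set_option maxRecDepth 40000 in
lemma C2_sub : ∀ x ∈ prodSet T3 E3, x ∈ prodSet M3 M3 := by decide

set_option maxRecDepth 40000 in
lemma S1_delta : IsEvenDeltaMatroid S1 :=
  ⟨⟨⟨Sum.elim ![true,true,true] ![true,true,true], rfl⟩, by decide⟩, by decide⟩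

set_option maxRecDepth 40000 in
lemma S1_closed : ∀ x ∈ S1, ∀ u v : Fin 3 ⊕ Fin 3, x ∈ prodSet M3 M3 →
    flip1 (flip1 x u) v ∈ prodSet M3 M3 → u ≠ v → flip1 x u ∉ prodSet M3 M3 →
    flip1 (flip1 x u) v ∈ S1 := by decide

set_option maxRecDepth 40000 in
lemma S1_sub : ∀ x ∈ S1, x ∈ prodSet M3 M3 := by decide

/-! ### The `Δ`-matroid properties of `M3` and `N = M3 × M3` -/

set_option maxRecDepth 40000 in
lemma M3_delta : IsDeltaMatroid M3 :=
  ⟨⟨![false,false,false], by decide⟩, by decide⟩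

set_option maxRecDepth 40000 in
lemma E3_delta : IsEvenDeltaMatroid E3 :=
  ⟨⟨⟨![false,false,false], by decide⟩, by decide⟩, by decide⟩

set_option maxRecDepth 40000 in
lemma T3_delta : IsEvenDeltaMatroid T3 :=
  ⟨⟨⟨![true,true,true], rfl⟩, by decide⟩, by decide⟩

set_option maxRecDepth 40000 in
lemma N_delta : IsDeltaMatroid (prodSet M3 M3) :=
  ⟨⟨Sum.elim ![false,false,false] ![false,false,false], by decide⟩, by decide⟩

/-! ### `M3` is an even-zebra -/

set_option maxRecDepth 40000 in
lemma M3_zebra : IsEvenZebra M3 := by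
  intro α hα
  simp only [M3, Set.mem_insert_iff, Set.mem_singleton_iff] at hα
  rcases hα with rfl | rfl | rfl | rfl | rfl
  · exact ⟨E3, E3_delta, by decide, by decide⟩
  · exact ⟨E3, E3_delta, by decide, by decide⟩
  · exact ⟨E3, E3_delta, by decide, by decide⟩
  · exact ⟨E3, E3_delta, by decide, by decide⟩
  · exact ⟨T3, T3_delta, by decide, by decide⟩

/-! ### `N` is coverable -/

set_option maxRecDepth 40000 in
lemma N_coverable : Coverable (prodSet M3 M3) := by
  intro α hα
  simp only [prodSet, Set.mem_setOf_eq] at hα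
  obtain ⟨h1, h2⟩ := hα
  simp only [M3, Set.mem_insert_iff, Set.mem_singleton_iff] at h1 h2
  have hαeq : α = Sum.elim (fun u => α (Sum.inl u)) (fun v => α (Sum.inr v)) :=
    funext fun x => by cases x <;> rfl
  rcases h1 with h | h | h | h | h <;> rcases h2 with g | g | g | g | g <;>
    (rw [h, g] at hαeq; subst hαeq;
     first
      | exact pick S1_delta S1_closed S1_sub (by decide)
      | exact pick EE_delta EE_closed EE_sub (by decide)
      | exact pick C1_delta C1_closed C1_sub (by decide)
      | exact pick C2_delta C2_closed C2_sub (by decide))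

/-! ### `N` is not an even-zebra -/

/-- The tuple `(000,111)`. -/
def aa : Fin 3 ⊕ Fin 3 → Bool := Sum.elim ![false,false,false] ![true,true,true]

/-- The tuple `(111,011)`. -/
def bb : Fin 3 ⊕ Fin 3 → Bool := Sum.elim ![true,true,true] ![false,true,true]

set_option maxRecDepth 40000 in
lemma N_not_zebra : ¬ IsEvenZebra (prodSet M3 M3) := by
  intro hz
  obtain ⟨Mα, h1, h2, h3⟩ := hz aa (by decide)
  have haa : aa ∈ Mα := h2 aa (by decide) (by decide)
  have hbb : bb ∈ Mα := h2 bb (by decide) (by decide)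
  obtain ⟨u, hu1, hu2⟩ := h1.1.2 aa haa bb hbb (Sum.inr 0) (by decide)
  rcases u with x | x <;> fin_cases x
  · have he : flipS aa ({Sum.inl 0, Sum.inr 0} : Finset (Fin 3 ⊕ Fin 3)) =
        flip1 (flip1 aa (Sum.inl 0)) (Sum.inr 0) := by decide
    exact absurd (h3 aa (by decide) (Sum.inl 0) (Sum.inr 0) (he ▸ hu2) (by decide)).1 (by decide)
  · have he : flipS aa ({Sum.inl 1, Sum.inr 0} : Finset (Fin 3 ⊕ Fin 3)) =
        flip1 (flip1 aa (Sum.inl 1)) (Sum.inr 0) := by decide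
    exact absurd (h3 aa (by decide) (Sum.inl 1) (Sum.inr 0) (he ▸ hu2) (by decide)).1 (by decide)
  · have he : flipS aa ({Sum.inl 2, Sum.inr 0} : Finset (Fin 3 ⊕ Fin 3)) =
        flip1 (flip1 aa (Sum.inl 2)) (Sum.inr 0) := by decide
    exact absurd (h3 aa (by decide) (Sum.inl 2) (Sum.inr 0) (he ▸ hu2) (by decide)).1 (by decide)
  · exact absurd (h1.2 _ hu2 aa haa) (by decide)
  · exact absurd (by decide) hu1
  · exact absurd (by decide) hu1

/-- `M3` is an even-zebra Δ-matroid, and its direct product `N = M3 × M3` is a coverable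
Δ-matroid which is not an even-zebra.  In particular, coverable Δ-matroids properly
contain even-zebras, and even-zebras are not closed under direct products. -/
theorem prodSet_M3_M3_coverable_not_evenZebra :
    IsDeltaMatroid M3 ∧ IsEvenZebra M3 ∧
    IsDeltaMatroid (prodSet M3 M3) ∧ Coverable (prodSet M3 M3) ∧
    ¬ IsEvenZebra (prodSet M3 M3) := by
  exact ⟨M3_delta, M3_zebra, N_delta, N_coverable, N_not_zebra⟩
end

section
/- Let M ⊆ {0,1}^a be a matching realizable even Δ-matroid and let f, g ∈ M. Then the set f △ g of coordinates where f and g differ can be partitioned into two-element sets P₁, …, P_k such that f ⊕ P_i ∈ M and g ⊕ P_i ∈ M for every i = 1, …, k. -/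
/-- A simple graph has a perfect matching. -/
def HasPerfectMatching {W : Type*} (G : SimpleGraph W) : Prop :=
  ∃ P : G.Subgraph, P.IsPerfectMatching

/-- A relation `R ⊆ {0,1}^a` is matching realizable if there are a finite simple graph
`G` and distinct vertices `v₁, …, v_a` such that `T ∈ R` iff the graph obtained from `G`
by deleting the vertices `v_i` with `T i = 1` has a perfect matching. -/
def MatchingRealizable {a : ℕ} (R : Set (Fin a → Bool)) : Prop :=
  ∃ (W : Type) (_ : Fintype W) (G : SimpleGraph W) (v : Fin a → W),
    Function.Injective v ∧
    ∀ T : Fin a → Bool,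
      T ∈ R ↔ HasPerfectMatching (G.induce {w : W | ∀ i, v i = w → T i = false})


section PairingHelpers
open Function

open Function

/-- functional form of a perfect matching of `G.induce s`. -/
def FnM {W : Type*} (G : SimpleGraph W) (s : Set W) (m : W → W) : Prop :=
  (∀ w, m (m w) = w) ∧ (∀ w, w ∈ s ↔ m w ≠ w) ∧ (∀ w, m w ≠ w → G.Adj w (m w))

lemma hasPM_of_fnM {W : Type*} {G : SimpleGraph W} {s : Set W} {m : W → W} (h : FnM G s m) :
    HasPerfectMatching (G.induce s) := by
  obtain ⟨h1, h2, h3⟩ := h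
  have hmem : ∀ w : s, m w.1 ∈ s := by
    intro w
    have hne : m w.1 ≠ w.1 := (h2 w.1).1 w.2
    have : m (m w.1) ≠ m w.1 := by rw [h1]; exact fun e => hne e.symm
    exact (h2 (m w.1)).2 this
  refine ⟨{ verts := Set.univ, Adj := fun p q => m p.1 = q.1,
            adj_sub := ?_, edge_vert := fun _ => trivial, symm := ⟨?_⟩ }, ?_, fun _ => trivial⟩
  · intro p q (hpq : m p.1 = q.1)
    have hne : m p.1 ≠ p.1 := (h2 p.1).1 p.2
    have := h3 p.1 hne
    rw [hpq] at this
    exact this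
  · intro p q (hpq : m p.1 = q.1)
    show m q.1 = p.1
    rw [← hpq, h1]
  · intro p _
    refine ⟨⟨m p.1, hmem p⟩, rfl, ?_⟩
    intro q (hq : m p.1 = q.1)
    exact Subtype.ext hq.symm

lemma fnM_of_hasPM {W : Type*} {G : SimpleGraph W} {s : Set W}
    (h : HasPerfectMatching (G.induce s)) : ∃ m, FnM G s m := by
  classical
  obtain ⟨P, hPm, hPs⟩ := h
  have key : ∀ w : s, ∃! u : s, P.Adj w u := fun w => hPm (hPs w)
  choose p hp hu using key
  refine ⟨fun w => if h : w ∈ s then (p ⟨w, h⟩).1 else w, ?_, ?_, ?_⟩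
  · intro w
    dsimp only
    by_cases hw : w ∈ s
    · rw [dif_pos hw]
      have hps : (p ⟨w, hw⟩).1 ∈ s := (p ⟨w, hw⟩).2
      rw [dif_pos hps]
      have h1 : P.Adj (p ⟨w, hw⟩) ⟨w, hw⟩ := P.adj_symm (hp ⟨w, hw⟩)
      have h2 : (⟨(p ⟨w, hw⟩).1, hps⟩ : s) = p ⟨w, hw⟩ := Subtype.ext rfl
      rw [h2]
      have := hu (p ⟨w, hw⟩) ⟨w, hw⟩ h1
      rw [← this]
    · rw [dif_neg hw, dif_neg hw]
  · intro w
    dsimp only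
    constructor
    · intro hw
      rw [dif_pos hw]
      intro he
      have : p ⟨w, hw⟩ = ⟨w, hw⟩ := Subtype.ext he
      have hadj := hp ⟨w, hw⟩
      rw [this] at hadj
      exact (G.induce s).irrefl (P.adj_sub hadj)
    · intro hne
      by_contra hw
      rw [dif_neg hw] at hne
      exact hne rfl
  · intro w hne
    dsimp only at hne ⊢
    by_cases hw : w ∈ s
    · rw [dif_pos hw] at hne ⊢
      exact P.adj_sub (hp ⟨w, hw⟩)
    · rw [dif_neg hw] at hne
      exact absurd rfl hne


/-- orbit relation of iterating `π`. -/
def Rel' {W : Type*} (π : W → W) (x w : W) : Prop := ∃ n : ℕ, π^[n] x = w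

lemma rel_trans' {W : Type*} {π : W → W} {x y z : W} (h1 : Rel' π x y) (h2 : Rel' π y z) :
    Rel' π x z := by
  obtain ⟨m, hm⟩ := h1; obtain ⟨n, hn⟩ := h2
  exact ⟨n + m, by rw [iterate_add_apply, hm, hn]⟩

lemma periodic_pt' {W : Type*} [Fintype W] (π : W → W) (hinj : Injective π) (x : W) :
    ∃ k, 0 < k ∧ π^[k] x = x := by
  obtain ⟨m, n, hmn, he⟩ := Finite.exists_ne_map_eq_of_infinite (fun n : ℕ => π^[n] x)
  rcases Nat.lt_or_ge m n with h | h
  · refine ⟨n - m, by omega, ?_⟩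
    have : π^[m] (π^[n-m] x) = π^[m] x := by
      rw [← iterate_add_apply]
      have : m + (n - m) = n := by omega
      rw [this]; exact he.symm
    exact hinj.iterate m this
  · have hlt : n < m := by omega
    refine ⟨m - n, by omega, ?_⟩
    have : π^[n] (π^[m-n] x) = π^[n] x := by
      rw [← iterate_add_apply]
      have : n + (m - n) = m := by omega
      rw [this]; exact he
    exact hinj.iterate n this

lemma rel_symm' {W : Type*} [Fintype W] {π : W → W} (hinj : Injective π) {x w : W}
    (h : Rel' π x w) : Rel' π w x := by
  obtain ⟨n, hn⟩ := h
  obtain ⟨k, hk, hkx⟩ := periodic_pt' π hinj x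
  refine ⟨n * k - n, ?_⟩
  rw [← hn, ← iterate_add_apply]
  have hle : n ≤ n * k := Nat.le_mul_of_pos_right n hk
  have : n * k - n + n = n * k := by omega
  rw [this, mul_comm, iterate_mul]
  exact iterate_fixed hkx n

lemma rel_flip' {W : Type*} {σ τ : W → W} (hσ : Involutive σ) (hτ : Involutive τ) {x w : W}
    (h : Rel' (σ ∘ τ) x w) : Rel' (τ ∘ σ) w x := by
  obtain ⟨n, hn⟩ := h
  refine ⟨n, ?_⟩
  rw [← hn]
  clear hn
  induction n with
  | zero => rfl
  | succ n ih =>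
    rw [iterate_succ_apply' (σ ∘ τ) n x, iterate_succ_apply (τ ∘ σ) n]
    show (τ ∘ σ)^[n] ((τ ∘ σ) ((σ ∘ τ) ((σ ∘ τ)^[n] x))) = x
    have : (τ ∘ σ) ((σ ∘ τ) ((σ ∘ τ)^[n] x)) = (σ ∘ τ)^[n] x := by
      show τ (σ (σ (τ _))) = _
      rw [hσ _, hτ _]
    rw [this]; exact ih

lemma key_orbit {W : Type*} [Fintype W] (σ τ : W → W) (hσ : Involutive σ) (hτ : Involutive τ)
    (x : W) (hτx : τ x = x) (hσx : σ x ≠ x) :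
    ∃ (C : Set W) (y : W),
      x ∈ C ∧ y ∈ C ∧ x ≠ y ∧
      (∀ w ∈ C, σ w ∈ C) ∧ (∀ w ∈ C, τ w ∈ C) ∧
      (∀ w ∈ C, (((σ w = w) ↔ (τ w = w)) ↔ (w ≠ x ∧ w ≠ y))) ∧
      (∀ w, w ∈ C ↔ Rel' (τ ∘ σ) x w) := by
  set π := τ ∘ σ with hπdef
  have hπinj : Injective π := hτ.injective.comp hσ.injective
  have hπτπ : ∀ w, π (τ (π w)) = τ w := by
    intro w; show τ (σ (τ (τ (σ w)))) = τ w; rw [hτ (σ w), hσ w]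
  have hπσπ : ∀ w, π (σ (π w)) = σ w := by
    intro w; show τ (σ (σ (τ (σ w)))) = σ w; rw [hσ (τ (σ w))]
    show τ (τ (σ w)) = σ w; rw [hτ (σ w)]
  have L1 : ∀ n w, π^[n] (τ (π^[n] w)) = τ w := by
    intro n
    induction n with
    | zero => intro w; rfl
    | succ n ih =>
      intro w
      rw [iterate_succ_apply' π n w, iterate_succ_apply π n]
      rw [hπτπ (π^[n] w)]
      exact ih w
  have L2 : ∀ n w, π^[n] (σ (π^[n] w)) = σ w := by
    intro n
    induction n with
    | zero => intro w; rfl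
    | succ n ih =>
      intro w
      rw [iterate_succ_apply' π n w, iterate_succ_apply π n]
      rw [hπσπ (π^[n] w)]
      exact ih w
  have hxper : x ∈ periodicPts π := by
    obtain ⟨k, hk, hkx⟩ := periodic_pt' π hπinj x
    exact ⟨k, hk, hkx⟩
  set k := minimalPeriod π x with hkdef
  have hk0 : 0 < k := minimalPeriod_pos_of_mem_periodicPts hxper
  have hkx : π^[k] x = x := iterate_minimalPeriod
  have hk2 : 2 ≤ k := by
    by_contra hcon
    push_neg at hcon
    have hk1 : k = 1 := by omega
    have hpx : π x = x := by
      have h' := hkx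
      rw [hk1] at h'
      simpa using h'
    have : τ (σ x) = τ x := by rw [hτx]; exact hpx
    exact hσx (hτ.injective this)
  -- the dvd characterizations
  have hdvd_iter : ∀ n, k ∣ n → π^[n] x = x := by
    intro n ⟨c, hc⟩
    rw [hc, iterate_mul]
    exact iterate_fixed hkx c
  have hiter_dvd : ∀ n, π^[n] x = x → k ∣ n := fun n h => IsPeriodicPt.minimalPeriod_dvd h
  have hinj2 : ∀ m n, m < k → n < k → π^[m] x = π^[n] x → m = n := by
    have step : ∀ m n, m < n → n < k → π^[m] x = π^[n] x → False := by
      intro m n hmn hn he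
      have h1 : π^[m] (π^[n - m] x) = π^[m] x := by
        rw [← iterate_add_apply]
        have : m + (n - m) = n := by omega
        rw [this]; exact he.symm
      have h2 : π^[n - m] x = x := hπinj.iterate m h1
      have := hiter_dvd _ h2
      have hle := Nat.le_of_dvd (by omega) this
      omega
    intro m n hm hn he
    rcases Nat.lt_trichotomy m n with h | h | h
    · exact absurd he (fun he => step m n h hn he)
    · exact h
    · exact absurd he.symm (fun he => step n m h hm he)
  have hτfix : ∀ n, (τ (π^[n] x) = π^[n] x) ↔ k ∣ 2 * n := by
    intro n
    have hL : π^[n] (τ (π^[n] x)) = x := by rw [L1 n x, hτx]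
    constructor
    · intro h
      apply hiter_dvd
      rw [two_mul, iterate_add_apply]
      rw [h] at hL
      exact hL
    · intro h
      have h2 : π^[n] (π^[n] x) = x := by
        rw [← iterate_add_apply, ← two_mul]
        exact hdvd_iter _ h
      have heq := hL.trans h2.symm
      exact hπinj.iterate n heq
  have hσfix : ∀ n, (σ (π^[n] x) = π^[n] x) ↔ k ∣ 2 * n + 1 := by
    intro n
    have hL : π^[n + 1] (σ (π^[n] x)) = x := by
      rw [iterate_succ_apply' π n]
      rw [L2 n x]
      show τ (σ (σ x)) = x
      rw [hσ x, hτx]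
    constructor
    · intro h
      apply hiter_dvd
      have : 2 * n + 1 = (n + 1) + n := by omega
      rw [this, iterate_add_apply]
      rw [h] at hL
      exact hL
    · intro h
      have h2 : π^[n + 1] (π^[n] x) = x := by
        rw [← iterate_add_apply]
        have : n + 1 + n = 2 * n + 1 := by omega
        rw [this]
        exact hdvd_iter _ h
      have := hL.trans h2.symm
      exact hπinj.iterate (n + 1) this
  have hA : ∀ n, n < k → (k ∣ 2 * n ↔ (n = 0 ∨ 2 * n = k)) := by
    intro n hn
    constructor
    · rintro ⟨c, hc⟩
      have hc2 : c < 2 := by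
        by_contra hcon
        push_neg at hcon
        have : k * 2 ≤ k * c := Nat.mul_le_mul_left k hcon
        omega
      interval_cases c <;> omega
    · rintro (h | h)
      · exact ⟨0, by omega⟩
      · exact ⟨1, by omega⟩
  have hB : ∀ n, n < k → (k ∣ 2 * n + 1 ↔ 2 * n + 1 = k) := by
    intro n hn
    constructor
    · rintro ⟨c, hc⟩
      have hc2 : c < 2 := by
        by_contra hcon
        push_neg at hcon
        have : k * 2 ≤ k * c := Nat.mul_le_mul_left k hcon
        omega
      interval_cases c <;> omega
    · rintro h
      exact ⟨1, by omega⟩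
  refine ⟨{w | Rel' π x w}, π^[k / 2] x, ⟨0, rfl⟩, ⟨k / 2, rfl⟩, ?_, ?_, ?_, ?_, fun w => Iff.rfl⟩
  · intro he
    have h0 : (0 : ℕ) = k / 2 := hinj2 0 (k / 2) hk0 (Nat.div_lt_self hk0 one_lt_two) he
    omega
  · rintro w ⟨n, hn⟩
    have : π^[n + 1] (σ (π^[n] x)) = x := by
      rw [iterate_succ_apply' π n, L2 n x]
      show τ (σ (σ x)) = x
      rw [hσ x, hτx]
    rw [hn] at this
    exact rel_symm' hπinj ⟨n + 1, this⟩
  · rintro w ⟨n, hn⟩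
    have : π^[n] (τ (π^[n] x)) = x := by rw [L1 n x, hτx]
    rw [hn] at this
    exact rel_symm' hπinj ⟨n, this⟩
  · rintro w ⟨n0, hn0⟩
    set n := n0 % k with hndef
    have hnx : π^[n] x = w := by rw [hndef, iterate_mod_minimalPeriod_eq]; exact hn0
    have hnk : n < k := Nat.mod_lt _ hk0
    subst hnx
    rw [hσfix n, hτfix n]
    have e1 : (π^[n] x ≠ π^[0] x) ↔ n ≠ 0 := by
      constructor
      · intro h he; exact h (by rw [he])
      · intro h he; exact h (hinj2 n 0 hnk hk0 he)
    have e2 : (π^[n] x ≠ π^[k / 2] x) ↔ n ≠ k / 2 := by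
      constructor
      · intro h he; exact h (by rw [he])
      · intro h he; exact h (hinj2 n (k / 2) hnk (Nat.div_lt_self hk0 one_lt_two) he)
    have e1' : (π^[n] x ≠ x) ↔ n ≠ 0 := by simpa using e1
    rw [e1', e2, hA n hnk, hB n hnk]
    omega

lemma key_orbit' {W : Type*} [Fintype W] (σ τ : W → W) (hσ : Involutive σ) (hτ : Involutive τ)
    (x : W) (hx : ¬((σ x = x) ↔ (τ x = x))) :
    ∃ (C : Set W) (y : W),
      x ∈ C ∧ y ∈ C ∧ x ≠ y ∧
      (∀ w ∈ C, σ w ∈ C) ∧ (∀ w ∈ C, τ w ∈ C) ∧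
      (∀ w ∈ C, (((σ w = w) ↔ (τ w = w)) ↔ (w ≠ x ∧ w ≠ y))) ∧
      (∀ w, w ∈ C ↔ Rel' (τ ∘ σ) x w) := by
  by_cases hτx : τ x = x
  · have hσx : σ x ≠ x := by tauto
    exact key_orbit σ τ hσ hτ x hτx hσx
  · have hσx : σ x = x := by tauto
    obtain ⟨C, y, h1, h2, h3, h4, h5, h6, h7⟩ := key_orbit τ σ hτ hσ x hσx hτx
    refine ⟨C, y, h1, h2, h3, h5, h4, ?_, ?_⟩
    · intro w hw
      have := h6 w hw
      tauto
    · intro w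
      rw [h7 w]
      constructor
      · intro h
        exact rel_symm' (hτ.injective.comp hσ.injective) (rel_flip' hσ hτ h)
      · intro h
        exact rel_symm' (hσ.injective.comp hτ.injective) (rel_flip' hτ hσ h)


/-- the vertex set remaining after deleting vertices indicated by `T`. -/
def Sset {W : Type*} {a : ℕ} (v : Fin a → W) (T : Fin a → Bool) : Set W :=
  {w | ∀ i, v i = w → T i = false}

lemma mem_Sset_apply {W : Type*} {a : ℕ} {v : Fin a → W} (hv : Injective v)
    (T : Fin a → Bool) (i : Fin a) : v i ∈ Sset v T ↔ T i = false := by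
  constructor
  · intro h; exact h i rfl
  · intro h i' hi'
    rw [hv hi']; exact h

lemma mem_Sset_of_not_range {W : Type*} {a : ℕ} {v : Fin a → W} (T : Fin a → Bool)
    (w : W) (hw : ∀ i, v i ≠ w) : w ∈ Sset v T :=
  fun i hi => absurd hi (hw i)

lemma Sset_flip_eq {W : Type*} {a : ℕ} {v : Fin a → W} (hv : Injective v)
    (T : Fin a → Bool) (i j : Fin a) (w : W) (hwi : w ≠ v i) (hwj : w ≠ v j) :
    (w ∈ Sset v (flipS T {i, j}) ↔ w ∈ Sset v T) := by
  constructor <;> intro h i' hi' <;> have h1 : i' ≠ i := fun e => hwi (by rw [← hi', e]) <;>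
    have h2 : i' ≠ j := fun e => hwj (by rw [← hi', e]) <;> have := h i' hi' <;>
    simpa [flipS, Finset.mem_insert, Finset.mem_singleton, h1, h2] using this

lemma flip_mem_aux {W : Type*} [Fintype W] {a : ℕ} {G : SimpleGraph W} {v : Fin a → W}
    (hv : Injective v) {fT : Fin a → Bool} {σ τ : W → W} (hσ : FnM G (Sset v fT) σ)
    (hτ1 : ∀ w, τ (τ w) = w) (hτ3 : ∀ w, τ w ≠ w → G.Adj w (τ w))
    {C : Set W} (hCσ : ∀ w ∈ C, σ w ∈ C) (hCτ : ∀ w ∈ C, τ w ∈ C)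
    {i j : Fin a} (hxC : v i ∈ C) (hyC : v j ∈ C)
    (hchar : ∀ w ∈ C, (((σ w = w) ↔ (τ w = w)) ↔ (w ≠ v i ∧ w ≠ v j))) :
    HasPerfectMatching (G.induce (Sset v (flipS fT {i, j}))) := by
  classical
  obtain ⟨h1, h2, h3⟩ := hσ
  have hCc : ∀ w, w ∉ C → σ w ∉ C := by
    intro w hw hc
    have := hCσ _ hc
    rw [h1 w] at this
    exact hw this
  apply hasPM_of_fnM (m := fun w => if w ∈ C then τ w else σ w)
  refine ⟨?_, ?_, ?_⟩
  · intro w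
    dsimp only
    by_cases hw : w ∈ C
    · rw [if_pos hw, if_pos (hCτ w hw)]
      exact hτ1 w
    · rw [if_neg hw, if_neg (hCc w hw)]
      exact h1 w
  · intro w
    dsimp only
    by_cases hw : w ∈ C
    · rw [if_pos hw]
      by_cases hwi : w = v i
      · subst hwi
        have hval : flipS fT {i, j} i = !(fT i) := by
          simp [flipS]
        have hgoal : ((!(fT i)) = false) ↔ fT i = true := by
          cases fT i <;> simp
        rw [mem_Sset_apply hv, hval, hgoal]
        have hS : fT i = false ↔ σ (v i) ≠ v i := by
          rw [← mem_Sset_apply hv fT i]; exact h2 _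
        have hX : ¬((σ (v i) = v i) ↔ (τ (v i) = v i)) := by
          rw [hchar (v i) hw]
          tauto
        constructor
        · intro hb he
          have hσe : σ (v i) = v i := by
            by_contra hne
            have hfe : fT i = false := hS.2 hne
            rw [hb] at hfe
            exact absurd hfe (by simp)
          exact hX (iff_of_true hσe he)
        · intro hne
          by_contra hb
          have hb' : fT i = false := by
            cases hfb : fT i
            · rfl
            · exact absurd hfb hb
          have hσne : σ (v i) ≠ v i := hS.1 hb'
          exact hX (iff_of_false hσne hne)
      · by_cases hwj : w = v j
        · subst hwj
          have hval : flipS fT {i, j} j = !(fT j) := by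
            simp [flipS]
          have hgoal : ((!(fT j)) = false) ↔ fT j = true := by
            cases fT j <;> simp
          rw [mem_Sset_apply hv, hval, hgoal]
          have hS : fT j = false ↔ σ (v j) ≠ v j := by
            rw [← mem_Sset_apply hv fT j]; exact h2 _
          have hX : ¬((σ (v j) = v j) ↔ (τ (v j) = v j)) := by
            rw [hchar (v j) hw]
            tauto
          constructor
          · intro hb he
            have hσe : σ (v j) = v j := by
              by_contra hne
              have hfe : fT j = false := hS.2 hne
              rw [hb] at hfe
              exact absurd hfe (by simp)
            exact hX (iff_of_true hσe he)
          · intro hne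
            by_contra hb
            have hb' : fT j = false := by
              cases hfb : fT j
              · rfl
              · exact absurd hfb hb
            have hσne : σ (v j) ≠ v j := hS.1 hb'
            exact hX (iff_of_false hσne hne)
        · rw [Sset_flip_eq hv fT i j w hwi hwj, h2 w]
          have := (hchar w hw).2 ⟨hwi, hwj⟩
          tauto
    · rw [if_neg hw]
      have hwi : w ≠ v i := fun e => hw (e ▸ hxC)
      have hwj : w ≠ v j := fun e => hw (e ▸ hyC)
      rw [Sset_flip_eq hv fT i j w hwi hwj]
      exact h2 w
  · intro w hm
    dsimp only at hm ⊢
    by_cases hw : w ∈ C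
    · rw [if_pos hw] at hm ⊢
      exact hτ3 w hm
    · rw [if_neg hw] at hm ⊢
      exact h3 w hm

end PairingHelpers

/-- If `M` is a matching realizable even Δ-matroid and `f, g ∈ M`, then the set of
coordinates where `f` and `g` differ can be partitioned into two-element sets `P₁,…,P_k`
with `f ⊕ Pᵢ ∈ M` and `g ⊕ Pᵢ ∈ M` for each `i`. -/
theorem matchingRealizable_pairs {a : ℕ} (M : Set (Fin a → Bool))
    (hM : IsEvenDeltaMatroid M) (hMR : MatchingRealizable M)
    (f g : Fin a → Bool) (hf : f ∈ M) (hg : g ∈ M) :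
    ∃ P : Finset (Finset (Fin a)),
      (∀ p ∈ P, p.card = 2) ∧
      (∀ p ∈ P, ∀ q ∈ P, p ≠ q → Disjoint p q) ∧
      (P.biUnion id = Finset.univ.filter fun v => f v ≠ g v) ∧
      (∀ p ∈ P, flipS f p ∈ M ∧ flipS g p ∈ M) := by
  classical
  obtain ⟨W, instW, G, v, hv, hcharM⟩ := hMR
  obtain ⟨σ, hσ⟩ := fnM_of_hasPM (s := Sset v f) ((hcharM f).1 hf)
  obtain ⟨τ, hτ⟩ := fnM_of_hasPM (s := Sset v g) ((hcharM g).1 hg)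
  have hσinv : Function.Involutive σ := hσ.1
  have hτinv : Function.Involutive τ := hτ.1
  have hπinj : Function.Injective (τ ∘ σ) := hτinv.injective.comp hσinv.injective
  have hdef : ∀ i : Fin a, f i ≠ g i → ¬((σ (v i) = v i) ↔ (τ (v i) = v i)) := by
    intro i hfg hiff
    have e1 : f i = false ↔ σ (v i) ≠ v i := by
      rw [← mem_Sset_apply hv f i]; exact hσ.2.1 _
    have e2 : g i = false ↔ τ (v i) ≠ v i := by
      rw [← mem_Sset_apply hv g i]; exact hτ.2.1 _
    have key : f i = false ↔ g i = false := by
      rw [e1, e2]; tauto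
    apply hfg
    cases hfi : f i <;> cases hgi : g i <;> simp_all
  have hdef' : ∀ w : W, ¬((σ w = w) ↔ (τ w = w)) → ∃ i, v i = w ∧ f i ≠ g i := by
    intro w hw
    by_cases hr : ∃ i, v i = w
    · obtain ⟨i, hi⟩ := hr
      refine ⟨i, hi, fun he => ?_⟩
      subst hi
      apply hw
      have e1 : f i = false ↔ σ (v i) ≠ v i := by
        rw [← mem_Sset_apply hv f i]; exact hσ.2.1 _
      have e2 : g i = false ↔ τ (v i) ≠ v i := by
        rw [← mem_Sset_apply hv g i]; exact hτ.2.1 _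
      rw [he] at e1
      have : (σ (v i) ≠ v i) ↔ (τ (v i) ≠ v i) := Iff.trans e1.symm e2
      tauto
    · push_neg at hr
      have h1 : w ∈ Sset v f := mem_Sset_of_not_range f w (fun i => hr i)
      have h2 : w ∈ Sset v g := mem_Sset_of_not_range g w (fun i => hr i)
      have hh1 := (hσ.2.1 w).1 h1
      have hh2 := (hτ.2.1 w).1 h2
      tauto
  have main : ∀ i : Fin a, f i ≠ g i → ∃ (C : Set W) (y : W),
      v i ∈ C ∧ y ∈ C ∧ v i ≠ y ∧ (∀ w ∈ C, σ w ∈ C) ∧ (∀ w ∈ C, τ w ∈ C) ∧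
      (∀ w ∈ C, (((σ w = w) ↔ (τ w = w)) ↔ (w ≠ v i ∧ w ≠ y))) ∧
      (∀ w, w ∈ C ↔ Rel' (τ ∘ σ) (v i) w) :=
    fun i h => key_orbit' σ τ hσinv hτinv (v i) (hdef i h)
  choose C y hC1 hC2 hC3 hC4 hC5 hC6 hC7 using main
  have hydef : ∀ i (h : f i ≠ g i), ¬((σ (y i h) = y i h) ↔ (τ (y i h) = y i h)) := by
    intro i h hiff
    exact ((hC6 i h (y i h) (hC2 i h)).1 hiff).2 rfl
  have hpart : ∀ i (h : f i ≠ g i), ∃ j, v j = y i h ∧ f j ≠ g j :=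
    fun i h => hdef' _ (hydef i h)
  choose pr hpr1 hpr2 using hpart
  have hprne : ∀ i (h : f i ≠ g i), pr i h ≠ i := by
    intro i h he
    apply hC3 i h
    rw [← hpr1 i h, he]
  have hclasseq : ∀ i (hi : f i ≠ g i), ∀ j (hj : f j ≠ g j), v j ∈ C i hi →
      ∀ w, w ∈ C j hj ↔ w ∈ C i hi := by
    intro i hi j hj hjm w
    rw [hC7 i hi, hC7 j hj]
    have hij : Rel' (τ ∘ σ) (v i) (v j) := (hC7 i hi _).1 hjm
    exact ⟨fun h => rel_trans' hij h, fun h => rel_trans' (rel_symm' hπinj hij) h⟩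
  have hprinv : ∀ i (hi : f i ≠ g i), pr (pr i hi) (hpr2 i hi) = i := by
    intro i hi
    have hj := hpr2 i hi
    have hjm : v (pr i hi) ∈ C i hi := by rw [hpr1 i hi]; exact hC2 i hi
    have hyjC : y (pr i hi) hj ∈ C i hi :=
      (hclasseq i hi (pr i hi) hj hjm _).1 (hC2 (pr i hi) hj)
    have hcases : y (pr i hi) hj = v i ∨ y (pr i hi) hj = y i hi := by
      by_contra hcon
      push_neg at hcon
      exact hydef (pr i hi) hj ((hC6 i hi _ hyjC).2 ⟨hcon.1, hcon.2⟩)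
    rcases hcases with h | h
    · exact hv (by rw [hpr1 (pr i hi) hj, h])
    · exfalso
      apply hC3 (pr i hi) hj
      rw [h, ← hpr1 i hi]
  have hflipf : ∀ i (hi : f i ≠ g i), flipS f {i, pr i hi} ∈ M := by
    intro i hi
    rw [hcharM]
    have hyC : v (pr i hi) ∈ C i hi := by rw [hpr1 i hi]; exact hC2 i hi
    have hchar' : ∀ w ∈ C i hi,
        (((σ w = w) ↔ (τ w = w)) ↔ (w ≠ v i ∧ w ≠ v (pr i hi))) := by
      intro w hw
      rw [hpr1 i hi]
      exact hC6 i hi w hw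
    exact flip_mem_aux hv hσ hτinv hτ.2.2 (hC4 i hi) (hC5 i hi) (hC1 i hi) hyC hchar'
  have hflipg : ∀ i (hi : f i ≠ g i), flipS g {i, pr i hi} ∈ M := by
    intro i hi
    rw [hcharM]
    have hyC : v (pr i hi) ∈ C i hi := by rw [hpr1 i hi]; exact hC2 i hi
    have hchar' : ∀ w ∈ C i hi,
        (((τ w = w) ↔ (σ w = w)) ↔ (w ≠ v i ∧ w ≠ v (pr i hi))) := by
      intro w hw
      rw [hpr1 i hi]
      exact Iff.trans iff_comm (hC6 i hi w hw)
    exact flip_mem_aux hv hτ hσinv hσ.2.2 (hC5 i hi) (hC4 i hi) (hC1 i hi) hyC hchar'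
  obtain ⟨prF, hprF_eq⟩ : ∃ prF : Fin a → Fin a, ∀ i (h : f i ≠ g i), prF i = pr i h :=
    ⟨fun i => if h : f i ≠ g i then pr i h else i, fun i h => dif_pos h⟩
  have hprFne : ∀ i, f i ≠ g i → prF i ≠ i := by
    intro i h
    rw [hprF_eq i h]
    exact hprne i h
  have hprFd : ∀ i, f i ≠ g i → f (prF i) ≠ g (prF i) := by
    intro i h
    rw [hprF_eq i h]
    exact hpr2 i h
  have hprFinv : ∀ i, f i ≠ g i → prF (prF i) = i := by
    intro i h
    rw [hprF_eq i h, hprF_eq (pr i h) (hpr2 i h)]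
    exact hprinv i h
  refine ⟨(Finset.univ.filter fun i => f i ≠ g i).image
      (fun i => ({i, prF i} : Finset (Fin a))), ?_, ?_, ?_, ?_⟩
  · intro p hp
    rw [Finset.mem_image] at hp
    obtain ⟨i, hi, rfl⟩ := hp
    rw [Finset.mem_filter] at hi
    exact Finset.card_pair (Ne.symm (hprFne i hi.2))
  · intro p hp q hq hpq
    rw [Finset.mem_image] at hp hq
    obtain ⟨i, hi, rfl⟩ := hp
    obtain ⟨i', hi', rfl⟩ := hq
    rw [Finset.mem_filter] at hi hi'
    by_contra hnd
    rw [Finset.not_disjoint_iff] at hnd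
    obtain ⟨t, ht1, ht2⟩ := hnd
    rw [Finset.mem_insert, Finset.mem_singleton] at ht1 ht2
    apply hpq
    rcases ht1 with rfl | rfl <;> rcases ht2 with h | h
    · rw [h]
    · rw [h, hprFinv i' hi'.2]
      exact Finset.pair_comm _ _
    · rw [← h, hprFinv i hi.2]
      exact Finset.pair_comm _ _
    · have he : i = i' := by
        have h2 := congrArg prF h
        rwa [hprFinv i hi.2, hprFinv i' hi'.2] at h2
      rw [he]
  · ext t
    simp only [Finset.mem_biUnion, id, Finset.mem_image, Finset.mem_filter, Finset.mem_univ,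
      true_and, Finset.mem_insert, Finset.mem_singleton]
    constructor
    · rintro ⟨p, ⟨i, hi, rfl⟩, ht⟩
      rw [Finset.mem_insert, Finset.mem_singleton] at ht
      rcases ht with rfl | rfl
      · exact hi
      · exact hprFd i hi
    · intro ht
      exact ⟨{t, prF t}, ⟨t, ht, rfl⟩, Finset.mem_insert_self _ _⟩
  · intro p hp
    rw [Finset.mem_image] at hp
    obtain ⟨i, hi, rfl⟩ := hp
    rw [Finset.mem_filter] at hi
    constructor
    · rw [hprF_eq i hi.2]
      exact hflipf i hi.2
    · rw [hprF_eq i hi.2]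
      exact hflipg i hi.2
end

section
/- Let M ⊆ {0,1}^6 be the set consisting of the nineteen tuples 000000; 100100, 011000, 001100, 001010, 000101, 001001, 010001, 100010; 011011, 100111, 110011, 110101, 111010, 001111, 101101, 101011, 111100; and 111111. Then M is an even Δ-matroid, and for f = 000000 and g = 111111 there is no partition of the six coordinates into two-element sets P₁, P₂, P₃ such that f ⊕ P_i ∈ M and g ⊕ P_i ∈ M for all i = 1, 2, 3. -/
/-- The nineteen-tuple relation of arity 6 from the appendix. -/
def M19 : Set (Fin 6 → Bool) :=
  {![false, false, false, false, false, false],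
   ![true, false, false, true, false, false],
   ![false, true, true, false, false, false],
   ![false, false, true, true, false, false],
   ![false, false, true, false, true, false],
   ![false, false, false, true, false, true],
   ![false, false, true, false, false, true],
   ![false, true, false, false, false, true],
   ![true, false, false, false, true, false],
   ![false, true, true, false, true, true],
   ![true, false, false, true, true, true],
   ![true, true, false, false, true, true],
   ![true, true, false, true, false, true],
   ![true, true, true, false, true, false],
   ![false, false, true, true, true, true],
   ![true, false, true, true, false, true],
   ![true, false, true, false, true, true],
   ![true, true, true, true, false, false],
   ![true, true, true, true, true, true]}


instance : DecidablePred (· ∈ M19) := fun α =>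
  decidable_of_iff
    (α = ![false, false, false, false, false, false] ∨
     α = ![true, false, false, true, false, false] ∨
     α = ![false, true, true, false, false, false] ∨
     α = ![false, false, true, true, false, false] ∨
     α = ![false, false, true, false, true, false] ∨
     α = ![false, false, false, true, false, true] ∨
     α = ![false, false, true, false, false, true] ∨
     α = ![false, true, false, false, false, true] ∨
     α = ![true, false, false, false, true, false] ∨
     α = ![false, true, true, false, true, true] ∨
     α = ![true, false, false, true, true, true] ∨
     α = ![true, true, false, false, true, true] ∨
     α = ![true, true, false, true, false, true] ∨
     α = ![true, true, true, false, true, false] ∨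
     α = ![false, false, true, true, true, true] ∨
     α = ![true, false, true, true, false, true] ∨
     α = ![true, false, true, false, true, true] ∨
     α = ![true, true, true, true, false, false] ∨
     α = ![true, true, true, true, true, true])
    (by simp [M19, Set.mem_insert_iff, Set.mem_singleton_iff])

set_option maxHeartbeats 4000000 in
set_option maxRecDepth 10000 in
/-- `M19` is an even Δ-matroid, but for `f = 000000` and `g = 111111` there is no
partition of the six coordinates into two-element sets `P₁, P₂, P₃` with
`f ⊕ Pᵢ ∈ M19` and `g ⊕ Pᵢ ∈ M19` for all `i`. -/
theorem M19_evenDeltaMatroid_no_pairing :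
    IsEvenDeltaMatroid M19 ∧
    ¬ ∃ P₁ P₂ P₃ : Finset (Fin 6),
        P₁.card = 2 ∧ P₂.card = 2 ∧ P₃.card = 2 ∧
        Disjoint P₁ P₂ ∧ Disjoint P₁ P₃ ∧ Disjoint P₂ P₃ ∧
        P₁ ∪ P₂ ∪ P₃ = Finset.univ ∧
        (flipS (fun _ => false) P₁ ∈ M19 ∧ flipS (fun _ => true) P₁ ∈ M19) ∧
        (flipS (fun _ => false) P₂ ∈ M19 ∧ flipS (fun _ => true) P₂ ∈ M19) ∧
        (flipS (fun _ => false) P₃ ∈ M19 ∧ flipS (fun _ => true) P₃ ∈ M19) := by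
  unfold IsEvenDeltaMatroid IsDeltaMatroid Set.Nonempty
  refine ⟨⟨⟨?_, ?_⟩, ?_⟩, ?_⟩
  · decide
  · decide
  · decide
  · rintro ⟨P₁, P₂, P₃, c1, c2, c3, d12, d13, d23, hu, ⟨m1, m1'⟩, ⟨m2, m2'⟩, ⟨m3, m3'⟩⟩
    have key : ∀ P : Finset (Fin 6), P.card = 2 → flipS (fun _ => false) P ∈ M19 →
        flipS (fun _ => true) P ∈ M19 →
        P = {0, 3} ∨ P = {1, 2} ∨ P = {2, 3} ∨ P = {2, 4} ∨ P = {3, 5} := by decide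
    have h1 := key P₁ c1 m1 m1'
    have h2 := key P₂ c2 m2 m2'
    have h3 := key P₃ c3 m3 m3'
    clear key
    rcases h1 with rfl | rfl | rfl | rfl | rfl <;>
      rcases h2 with rfl | rfl | rfl | rfl | rfl <;>
        rcases h3 with rfl | rfl | rfl | rfl | rfl <;>
          revert d12 d13 d23 hu <;> decide
end

section
/- There exists an even Δ-matroid M ⊆ {0,1}^6 of arity 6 that is not matching realizable. -/
/-! ### Auxiliary material for the proof -/

open Function

lemma hasPM_iff_invol {W : Type} {G : SimpleGraph W} (s : Set W) :
    HasPerfectMatching (G.induce s) ↔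
    ∃ f : W → W, Function.Involutive f ∧ (∀ x, f x ≠ x → G.Adj x (f x)) ∧
      (∀ x, x ∈ s ↔ f x ≠ x) := by
  classical
  constructor
  · rintro ⟨P, hP⟩
    rw [SimpleGraph.Subgraph.isPerfectMatching_iff] at hP
    have hadj : ∀ (x : W) (h : x ∈ s), P.Adj ⟨x, h⟩ (hP ⟨x, h⟩).choose :=
      fun x h => (hP ⟨x, h⟩).choose_spec.1
    have huniq : ∀ (x : W) (h : x ∈ s) (y), P.Adj ⟨x, h⟩ y → y = (hP ⟨x, h⟩).choose :=
      fun x h y hy => (hP ⟨x, h⟩).choose_spec.2 y hy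
    have hGadj : ∀ (x : W) (h : x ∈ s), G.Adj x ((hP ⟨x, h⟩).choose : W) :=
      fun x h => P.adj_sub (hadj x h)
    refine ⟨fun x => if h : x ∈ s then ((hP ⟨x, h⟩).choose : W) else x, ?_, ?_, ?_⟩
    · intro x
      by_cases h : x ∈ s
      · simp only [dif_pos h]
        have hy : ((hP ⟨x, h⟩).choose : W) ∈ s := (hP ⟨x, h⟩).choose.2
        simp only [dif_pos hy]
        have : P.Adj ⟨((hP ⟨x, h⟩).choose : W), hy⟩ ⟨x, h⟩ := (hadj x h).symm
        have := huniq _ hy _ this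
        rw [← this]
      · simp only [dif_neg h, dif_neg h]
    · intro x hne
      by_cases h : x ∈ s
      · simpa only [dif_pos h] using hGadj x h
      · simp only [dif_neg h] at hne; exact absurd rfl hne
    · intro x
      constructor
      · intro h
        simp only [dif_pos h]
        exact fun he => (G.ne_of_adj (hGadj x h)) he.symm
      · intro hne
        by_contra h
        simp only [dif_neg h] at hne
        exact hne rfl
  · rintro ⟨f, hinv, hadj, hmem⟩
    refine ⟨⟨Set.univ, fun u w => f ↑u = ↑w, ?_, fun _ => trivial, ?_⟩, ?_, fun u => trivial⟩
    · rintro u w (h : f ↑u = ↑w)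
      have hne : f ↑u ≠ ↑u := (hmem _).mp u.2
      have : G.Adj ↑u (f ↑u) := hadj ↑u hne
      rw [h] at this
      exact this
    · refine ⟨?_⟩
      rintro u w (h : f ↑u = ↑w)
      show f ↑w = ↑u
      rw [← h, hinv]
    · intro u _
      have hne : f ↑u ≠ ↑u := (hmem _).mp u.2
      have hfu : f ↑u ∈ s := (hmem _).mpr (by rw [hinv]; exact fun e => hne e.symm)
      exact ⟨⟨f ↑u, hfu⟩, rfl, fun y (hy : f ↑u = ↑y) => Subtype.ext hy.symm⟩

lemma matching_pairing {ar : ℕ} (R : Set (Fin ar → Bool)) (hR : MatchingRealizable R)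
    (h0 : (fun _ => false) ∈ R) (h1 : (fun _ => true) ∈ R) :
    ∃ σ : Fin ar → Fin ar, Function.Involutive σ ∧ (∀ i, σ i ≠ i) ∧
      ∀ T : Fin ar → Bool, (∀ i, T (σ i) = T i) → T ∈ R := by
  classical
  obtain ⟨W, _, G, v, hv, hiff⟩ := hR
  obtain ⟨φ, hφi, hφa, hφm⟩ := (hasPM_iff_invol _).mp ((hiff _).mp h0)
  obtain ⟨ψ, hψi, hψa, hψm⟩ := (hasPM_iff_invol _).mp ((hiff _).mp h1)
  have hφfix : ∀ x, φ x ≠ x := fun x => (hφm x).mp (fun i _ => rfl)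
  have hψfix : ∀ x, ψ x = x ↔ ∃ i, v i = x := by
    intro x
    have h2 := hψm x
    simp only [Set.mem_setOf_eq, Bool.true_eq_false, imp_false] at h2
    rw [← not_exists] at h2
    exact (not_iff_not.mp h2).symm
  -- permutations
  set Φ : Equiv.Perm W := Function.Involutive.toPerm φ hφi with hΦdef
  set Ψ : Equiv.Perm W := Function.Involutive.toPerm ψ hψi with hΨdef
  set g : Equiv.Perm W := Φ * Ψ with hgdef
  have hΦc : ∀ x, Φ x = φ x := fun x => rfl
  have hΨc : ∀ x, Ψ x = ψ x := fun x => rfl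
  have hgc : ∀ x, g x = φ (ψ x) := fun x => rfl
  have hΨ2 : Ψ * Ψ = 1 := by ext x; exact hψi x
  have hΦ2 : Φ * Φ = 1 := by ext x; exact hφi x
  have hΨinv : Ψ⁻¹ = Ψ := inv_eq_of_mul_eq_one_right hΨ2
  have hΦinv : Φ⁻¹ = Φ := inv_eq_of_mul_eq_one_right hΦ2
  have hginv : g⁻¹ = Ψ * Φ := by rw [hgdef, mul_inv_rev, hΨinv, hΦinv]
  have hconjΨ : ∀ i : ℤ, Ψ * g ^ i * Ψ = (g ^ i)⁻¹ := by
    intro i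
    have h2 : Ψ * g ^ i * Ψ⁻¹ = (Ψ * g * Ψ⁻¹) ^ i := by
      simpa [MulAut.conj_apply] using (map_zpow (MulAut.conj Ψ) g i).symm
    have h1 : Ψ * g * Ψ⁻¹ = g⁻¹ := by
      rw [hΨinv, hginv, hgdef, mul_assoc, mul_assoc, hΨ2, mul_one]
    calc Ψ * g ^ i * Ψ = Ψ * g ^ i * Ψ⁻¹ := by rw [hΨinv]
      _ = (Ψ * g * Ψ⁻¹) ^ i := h2
      _ = (g ^ i)⁻¹ := by rw [h1, inv_zpow]
  have hconjΦ : ∀ i : ℤ, Φ * g ^ i * Φ = (g ^ i)⁻¹ := by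
    intro i
    have h2 : Φ * g ^ i * Φ⁻¹ = (Φ * g * Φ⁻¹) ^ i := by
      simpa [MulAut.conj_apply] using (map_zpow (MulAut.conj Φ) g i).symm
    have h1 : Φ * g * Φ⁻¹ = g⁻¹ := by
      rw [hΦinv, hginv, hgdef, ← mul_assoc, hΦ2, one_mul]
    calc Φ * g ^ i * Φ = Φ * g ^ i * Φ⁻¹ := by rw [hΦinv]
      _ = (Φ * g * Φ⁻¹) ^ i := h2
      _ = (g ^ i)⁻¹ := by rw [h1, inv_zpow]
  -- pointwise conjugation at ψ-fixed points
  have hψg : ∀ (x : W), ψ x = x → ∀ i : ℤ, ψ ((g ^ i) x) = (g ^ (-i)) x := by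
    intro x hx i
    calc ψ ((g ^ i) x) = (Ψ * g ^ i * Ψ) x := by
          rw [Equiv.Perm.mul_apply, Equiv.Perm.mul_apply, hΨc, hΨc, hx]
      _ = (g ^ i)⁻¹ x := by rw [hconjΨ i]
      _ = (g ^ (-i)) x := by rw [zpow_neg]
  have hφg : ∀ (x : W), ψ x = x → ∀ i : ℤ, φ ((g ^ i) x) = (g ^ (1 - i)) x := by
    intro x hx i
    have hxg : x = φ (g x) := by
      rw [hgc, hφi, hx]
    have hΦgx : Φ (g x) = x := by rw [hΦc, ← hxg]
    calc φ ((g ^ i) x) = (Φ * g ^ i * Φ) (g x) := by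
          rw [Equiv.Perm.mul_apply, Equiv.Perm.mul_apply, hΦgx, hΦc]
      _ = (g ^ i)⁻¹ (g x) := by rw [hconjΦ i]
      _ = ((g ^ i)⁻¹ * g) x := by
          show (g ^ i)⁻¹ (g x) = (g ^ i)⁻¹ (g x)
          rfl
      _ = (g ^ (1 - i)) x := by
          congr 1
          group
  -- periodicity
  set mp : W → ℕ := fun x => Function.minimalPeriod (⇑g) x with hmpdef
  have hperiodic : ∀ x : W, x ∈ Function.periodicPts ⇑g := by
    intro x
    refine ⟨orderOf g, orderOf_pos g, ?_⟩
    show (⇑g)^[orderOf g] x = x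
    rw [Equiv.Perm.iterate_eq_pow, pow_orderOf_eq_one]
    rfl
  have hmpos : ∀ x, 0 < mp x := fun x =>
    Function.minimalPeriod_pos_of_mem_periodicPts (hperiodic x)
  have hmdvd : ∀ (x : W) (n : ℕ), (g ^ n) x = x ↔ mp x ∣ n := fun x n =>
    Function.isPeriodicPt_iff_minimalPeriod_dvd
  have hmper : ∀ x, (g ^ (mp x)) x = x := fun x => (hmdvd x _).mpr dvd_rfl
  have hfixzpow : ∀ (e : Equiv.Perm W) (x : W), e x = x → ∀ q : ℤ, (e ^ q) x = x := by
    intro e x hx q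
    induction q using Int.induction_on with
    | zero => rfl
    | succ n ih => rw [zpow_add, zpow_one, Equiv.Perm.mul_apply, hx]; exact ih
    | pred n ih =>
        have hinvx : e⁻¹ x = x := by
          conv_lhs => rw [← hx]
          exact Equiv.symm_apply_apply e x
        rw [sub_eq_add_neg, zpow_add, Equiv.Perm.mul_apply, zpow_neg_one, hinvx]
        exact ih
  have hmulfix : ∀ (x : W) (q : ℤ), (g ^ ((mp x : ℤ) * q)) x = x := by
    intro x q
    rw [zpow_mul]
    exact hfixzpow _ x (by rw [zpow_natCast]; exact hmper x) q
  have hzfix : ∀ (x : W) (j : ℤ), (g ^ j) x = x ↔ ((mp x : ℤ)) ∣ j := by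
    intro x j
    constructor
    · intro hj
      have hne : (mp x : ℤ) ≠ 0 := by exact_mod_cast (hmpos x).ne'
      have hj2 : j = (mp x : ℤ) * (j / (mp x : ℤ)) + j % (mp x : ℤ) :=
        (Int.mul_ediv_add_emod _ _).symm
      have hr0 : 0 ≤ j % (mp x : ℤ) := Int.emod_nonneg j hne
      have hrlt : j % (mp x : ℤ) < (mp x : ℤ) :=
        Int.emod_lt_of_pos j (by exact_mod_cast hmpos x)
      have hgr : (g ^ (j % (mp x : ℤ))) x = x := by
        have h3 : (g ^ j) x = (g ^ (j % (mp x : ℤ)))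
            ((g ^ ((mp x : ℤ) * (j / (mp x : ℤ)))) x) := by
          rw [← Equiv.Perm.mul_apply, ← zpow_add]
          rw [Int.emod_add_mul_ediv]
        rw [hmulfix] at h3
        rw [← h3, hj]
      obtain ⟨r', hr'⟩ : ∃ r' : ℕ, (r' : ℤ) = j % (mp x : ℤ) :=
        ⟨(j % (mp x : ℤ)).toNat, Int.toNat_of_nonneg hr0⟩
      rw [← hr', zpow_natCast] at hgr
      have hdvd : mp x ∣ r' := (hmdvd x r').mp hgr
      have hrlt' : r' < mp x := by exact_mod_cast hr' ▸ hrlt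
      have hr0' : r' = 0 := Nat.eq_zero_of_dvd_of_lt hdvd hrlt'
      apply Int.dvd_of_emod_eq_zero
      rw [← hr', hr0']
      rfl
    · rintro ⟨q, rfl⟩
      exact hmulfix x q
  -- the partner map
  set B : W → W := fun x => (g ^ ((mp x / 2 : ℕ) : ℤ)) x with hBdef
  have hmeven : ∀ x : W, ψ x = x → Even (mp x) := by
    intro x hx
    by_contra hodd
    obtain ⟨t, ht⟩ := Nat.not_even_iff_odd.mp hodd
    have h1 : (g ^ (-(t : ℤ))) x = (g ^ ((t : ℤ) + 1)) x := by
      have h0 : (g ^ (-(t : ℤ))) x = (g ^ (-(t : ℤ))) ((g ^ ((mp x : ℤ))) x) := by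
        rw [(hzfix x _).mpr dvd_rfl]
      rw [h0, ← Equiv.Perm.mul_apply, ← zpow_add]
      congr 2
      omega
    have h2 := hφg x hx ((t : ℤ) + 1)
    rw [show (1 - ((t : ℤ) + 1)) = -(t : ℤ) by ring, h1] at h2
    exact hφfix _ h2
  have hBfix : ∀ x : W, ψ x = x → ψ (B x) = B x := by
    intro x hx
    show ψ ((g ^ ((mp x / 2 : ℕ) : ℤ)) x) = (g ^ ((mp x / 2 : ℕ) : ℤ)) x
    rw [hψg x hx]
    obtain ⟨n, hn⟩ := hmeven x hx
    have h0 : (g ^ (-((mp x / 2 : ℕ) : ℤ))) x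
        = (g ^ (-((mp x / 2 : ℕ) : ℤ))) ((g ^ ((mp x : ℤ))) x) := by
      rw [(hzfix x _).mpr dvd_rfl]
    rw [h0, ← Equiv.Perm.mul_apply, ← zpow_add]
    congr 2
    omega
  have hBne : ∀ x : W, ψ x = x → B x ≠ x := by
    intro x hx he
    have h1 : ((mp x : ℤ)) ∣ ((mp x / 2 : ℕ) : ℤ) := (hzfix x _).mp he
    have h2 : mp x ∣ mp x / 2 := by exact_mod_cast h1
    obtain ⟨n, hn⟩ := hmeven x hx
    have h3 := hmpos x
    have h4 : mp x / 2 ≠ 0 := by omega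
    have h5 := Nat.le_of_dvd (Nat.pos_of_ne_zero h4) h2
    omega
  have hmpB : ∀ x : W, mp (B x) = mp x := by
    intro x
    show Function.minimalPeriod ⇑g ((g ^ ((mp x / 2 : ℕ) : ℤ)) x) = _
    rw [zpow_natCast]
    exact Function.minimalPeriod_apply_iterate (hperiodic x) _
  have hBB : ∀ x : W, ψ x = x → B (B x) = x := by
    intro x hx
    show (g ^ ((mp (B x) / 2 : ℕ) : ℤ)) (B x) = x
    rw [hmpB x]
    show (g ^ ((mp x / 2 : ℕ) : ℤ)) ((g ^ ((mp x / 2 : ℕ) : ℤ)) x) = x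
    rw [← Equiv.Perm.mul_apply, ← zpow_add]
    apply (hzfix x _).mpr
    obtain ⟨n, hn⟩ := hmeven x hx
    have h0 : ((mp x / 2 : ℕ) : ℤ) + ((mp x / 2 : ℕ) : ℤ) = (mp x : ℤ) := by omega
    rw [h0]
  have hfix2 : ∀ x : W, ψ x = x → ∀ j : ℤ,
      ψ ((g ^ j) x) = (g ^ j) x → (g ^ j) x = x ∨ (g ^ j) x = B x := by
    intro x hx j hfix
    rw [hψg x hx j] at hfix
    have h2j : (g ^ (2 * j)) x = x := by
      have h3 : (g ^ j) ((g ^ (-j)) x) = (g ^ j) ((g ^ j) x) := congrArg _ hfix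
      rw [← Equiv.Perm.mul_apply, ← zpow_add, ← Equiv.Perm.mul_apply, ← zpow_add,
        show j + -j = 0 by ring, zpow_zero, show j + j = 2 * j by ring] at h3
      rw [← h3]
      rfl
    obtain ⟨k, hk⟩ := (hzfix x _).mp h2j
    obtain ⟨n, hn⟩ := hmeven x hx
    have hmn : (mp x : ℤ) = 2 * (n : ℤ) := by omega
    have hj : j = (n : ℤ) * k := by
      have h4 : 2 * j = 2 * ((n : ℤ) * k) := by rw [hk, hmn]; ring
      exact mul_left_cancel₀ two_ne_zero h4
    have hn2 : ((mp x / 2 : ℕ) : ℤ) = (n : ℤ) := by omega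
    rcases Int.even_or_odd k with ⟨l, hl⟩ | ⟨l, hl⟩
    · left
      exact (hzfix x j).mpr ⟨l, by rw [hj, hl, hmn]; ring⟩
    · right
      show _ = (g ^ ((mp x / 2 : ℕ) : ℤ)) x
      have h5 : (g ^ j) x = (g ^ ((n : ℤ))) ((g ^ ((mp x : ℤ) * l)) x) := by
        rw [← Equiv.Perm.mul_apply, ← zpow_add]
        congr 2
        rw [hj, hl, hmn]; ring
      rw [h5, hmulfix x l, hn2]
  -- the pairing on indices
  have hmark : ∀ i : Fin ar, ψ (v i) = v i := fun i => (hψfix (v i)).mpr ⟨i, rfl⟩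
  have hBmark : ∀ i : Fin ar, ∃ j, v j = B (v i) := fun i => (hψfix _).mp (hBfix _ (hmark i))
  set σ : Fin ar → Fin ar := fun i => (hBmark i).choose with hσdef
  have hσB : ∀ i, v (σ i) = B (v i) := fun i => (hBmark i).choose_spec
  have hσinv : Function.Involutive σ := by
    intro i
    apply hv
    rw [hσB, hσB, hBB _ (hmark i)]
  have hσne : ∀ i, σ i ≠ i := by
    intro i he
    have h6 := hσB i
    rw [he] at h6
    exact hBne _ (hmark i) h6.symm
  refine ⟨σ, hσinv, hσne, ?_⟩
  intro T hT
  apply (hiff T).mpr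
  apply (hasPM_iff_invol _).mpr
  set Flip : W → Prop := fun x => ∃ k, T k = true ∧ ∃ j : ℤ, (g ^ j) (v k) = x with hFlipdef
  set χ : W → W := fun x => if Flip x then ψ x else φ x with hχdef
  have hFlipψ : ∀ x, Flip x → Flip (ψ x) := by
    rintro x ⟨k, hk, j, hj⟩
    refine ⟨k, hk, -j, ?_⟩
    rw [← hψg _ (hmark k) j, hj]
  have hFlipφ : ∀ x, Flip x → Flip (φ x) := by
    rintro x ⟨k, hk, j, hj⟩
    refine ⟨k, hk, 1 - j, ?_⟩
    rw [← hφg _ (hmark k) j, hj]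
  have hFlipψ' : ∀ x, Flip (ψ x) ↔ Flip x := fun x =>
    ⟨fun h => by have h7 := hFlipψ _ h; rwa [hψi x] at h7, hFlipψ x⟩
  have hFlipφ' : ∀ x, Flip (φ x) ↔ Flip x := fun x =>
    ⟨fun h => by have h7 := hFlipφ _ h; rwa [hφi x] at h7, hFlipφ x⟩
  have hχψ : ∀ x, Flip x → χ x = ψ x := fun x h => if_pos h
  have hχφ : ∀ x, ¬ Flip x → χ x = φ x := fun x h => if_neg h
  have hχi : Function.Involutive χ := by
    intro x
    by_cases h : Flip x
    · rw [hχψ x h, hχψ _ ((hFlipψ' x).mpr h)]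
      exact hψi x
    · rw [hχφ x h, hχφ _ (fun hc => h ((hFlipφ' x).mp hc))]
      exact hφi x
  have hχa : ∀ x, χ x ≠ x → G.Adj x (χ x) := by
    intro x hne
    by_cases h : Flip x
    · rw [hχψ x h] at hne ⊢
      exact hψa x hne
    · rw [hχφ x h] at hne ⊢
      exact hφa x hne
  refine ⟨χ, hχi, hχa, ?_⟩
  intro x
  have hfixiff : χ x = x ↔ (Flip x ∧ ψ x = x) := by
    by_cases h : Flip x
    · rw [hχψ x h]
      exact ⟨fun he => ⟨h, he⟩, fun he => he.2⟩
    · rw [hχφ x h]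
      exact ⟨fun he => absurd he (hφfix x), fun he => absurd he.1 h⟩
  have hkey : (Flip x ∧ ψ x = x) ↔ ∃ i, v i = x ∧ T i = true := by
    constructor
    · rintro ⟨⟨k, hk, j, hj⟩, hfix⟩
      rw [← hj] at hfix
      rcases hfix2 _ (hmark k) j hfix with h | h
      · exact ⟨k, by rw [← hj, h], hk⟩
      · refine ⟨σ k, ?_, ?_⟩
        · rw [hσB, ← h, hj]
        · rw [hT k, hk]
    · rintro ⟨i, hvi, hTi⟩
      refine ⟨⟨i, hTi, 0, ?_⟩, (hψfix x).mpr ⟨i, hvi⟩⟩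
      simpa using hvi
  constructor
  · intro hx he
    obtain ⟨i, hvi, hTi⟩ := hkey.mp (hfixiff.mp he)
    have h8 : T i = false := hx i hvi
    rw [h8] at hTi
    exact Bool.false_ne_true hTi
  · intro hne i hvi
    by_contra hTi
    have hTi' : T i = true := by
      revert hTi
      cases T i <;> simp
    exact hne (hfixiff.mpr (hkey.mpr ⟨i, hvi, hTi'⟩))


/-- Encode a 6-tuple of Booleans as a natural number. -/
def tupleCode (α : Fin 6 → Bool) : ℕ :=
  (cond (α 0) 1 0) + (cond (α 1) 2 0) + (cond (α 2) 4 0) +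
  (cond (α 3) 8 0) + (cond (α 4) 16 0) + (cond (α 5) 32 0)

/-- Codes of the members of our counterexample even Δ-matroid. -/
def tupleCodeList : List ℕ :=
  [0, 3, 5, 6, 17, 18, 20, 24, 27, 29, 30, 33, 34, 39, 40, 43, 45, 46, 48, 51, 53, 54, 60, 63]

/-- The counterexample even Δ-matroid of arity 6. -/
def counterM : Set (Fin 6 → Bool) := {α | tupleCode α ∈ tupleCodeList}

instance : DecidablePred (· ∈ counterM) := fun α =>
  inferInstanceAs (Decidable (tupleCode α ∈ tupleCodeList))

set_option maxRecDepth 100000 in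
lemma counterM_isEvenDeltaMatroid : IsEvenDeltaMatroid counterM := by
  refine ⟨⟨⟨fun _ => false, by decide⟩, ?_⟩, ?_⟩ <;> decide

set_option maxRecDepth 100000 in
lemma counterM_no_involution : ¬ ∃ σ : Equiv.Perm (Fin 6), (∀ x, σ (σ x) = x) ∧
    (∀ i, σ i ≠ i) ∧ ∀ T : Fin 6 → Bool, (∀ i, T (σ i) = T i) → T ∈ counterM := by
  decide

/-- There exists an even Δ-matroid of arity 6 that is not matching realizable. -/
theorem exists_evenDeltaMatroid_not_matchingRealizable :
    ∃ M : Set (Fin 6 → Bool), IsEvenDeltaMatroid M ∧ ¬ MatchingRealizable M := by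
  refine ⟨counterM, counterM_isEvenDeltaMatroid, ?_⟩
  intro hMR
  have h0 : (fun _ => false) ∈ counterM := by decide
  have h1 : (fun _ => true) ∈ counterM := by decide
  obtain ⟨σ, hinv, hne, hcl⟩ := matching_pairing counterM hMR h0 h1
  exact counterM_no_involution
    ⟨Function.Involutive.toPerm σ hinv, fun x => hinv x, hne, hcl⟩
end
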